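/- For every SKS derivation Φ there exists an atomic flow A, unique up to isomorphism, together with a surjective map from the atom occurrences of Φ to the edges of A, such that: in every inference step, the atom occurrences of the surrounding context in the premiss are mapped to the same edges as the corresponding occurrences in the conclusion; each instance of a structural rule ai↓, ai↑, aw↓, aw↑, ac↓, ac↑ maps its active atom occurrences to the edges of a vertex of A carrying the corresponding label (the two disjuncts of an ai↓ instance to its two lower edges, the two conjuncts of an ai↑ instance to its two upper edges, the conclusion atom of aw↓ to its one lower edge, the premiss atom of aw↑ to its one upper edge, the two disjuncts and the contractum of ac↓ to its two upper edges and its one lower edge, and dually for ac↑); and each instance of s, m or = maps every atom occurrence of its premiss and the corresponding occurrence of its conclusion to the same edge. -/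

import Mathlib

set_option linter.unusedVariables false

namespace AF

/-! ### Formulae of system SKS.

Atoms are pairs `(n, b)`; the involution `ā` flips the Boolean, so it is
fixed-point free. -/

inductive Formula : Type
  | tt : Formula
  | ff : Formula
  | atom : ℕ → Bool → Formula
  | or : Formula → Formula → Formula
  | and : Formula → Formula → Formula
  deriving DecidableEq

namespace Formula

/-- Subformula at a position (`false` = left child, `true` = right child). -/
def sub : Formula → List Bool → Option Formula
  | φ, [] => some φ
  | .or α _, false :: p => sub α p
  | .or _ β, true :: p => sub β p
  | .and α _, false :: p => sub α p
  | .and _ β, true :: p => sub β p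
  | _, _ :: _ => none

/-- Replace the subformula at a position. -/
def repl : Formula → List Bool → Formula → Formula
  | _, [], ψ => ψ
  | .or α β, false :: p, ψ => .or (repl α p ψ) β
  | .or α β, true :: p, ψ => .or α (repl β p ψ)
  | .and α β, false :: p, ψ => .and (repl α p ψ) β
  | .and α β, true :: p, ψ => .and α (repl β p ψ)
  | φ, _ :: _, _ => φ

/-- `p` is an atom occurrence of `φ`. -/
def IsOcc (φ : Formula) (p : List Bool) : Prop :=
  ∃ n b, φ.sub p = some (.atom n b)

end Formula

/-! ### Inference rules.

The rule `=` of SKS replaces a formula by an equivalent one under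
commutativity, associativity and the unit equations; each single instance of
`=` applies one equation (in either direction), so we list the equations as
individual rule names, all marked as being instances of `=` via `isEq`. -/

inductive RuleName : Type
  | aiDown | aiUp | awDown | awUp | acDown | acUp
  | s | m
  | eqOrComm | eqAndComm
  | eqOrAssocL | eqOrAssocR | eqAndAssocL | eqAndAssocR
  | eqOrUnitDel | eqOrUnitAdd | eqAndUnitDel | eqAndUnitAdd
  | eqTTDel | eqTTAdd | eqFFDel | eqFFAdd
  deriving DecidableEq

namespace RuleName

/-- The atomic structural rules. -/
def isStructural : RuleName → Bool
  | .aiDown | .aiUp | .awDown | .awUp | .acDown | .acUp => true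
  | _ => false

/-- The rule names that are instances of the rule `=`. -/
def isEq : RuleName → Bool
  | .aiDown | .aiUp | .awDown | .awUp | .acDown | .acUp | .s | .m => false
  | _ => true

end RuleName

/-- Rule instances (redex ⟹ contractum). -/
inductive RuleInstance : RuleName → Formula → Formula → Prop
  | aiDown (n : ℕ) (b : Bool) :
      RuleInstance .aiDown .tt (.or (.atom n b) (.atom n (!b)))
  | aiUp (n : ℕ) (b : Bool) :
      RuleInstance .aiUp (.and (.atom n b) (.atom n (!b))) .ff
  | awDown (n : ℕ) (b : Bool) : RuleInstance .awDown .ff (.atom n b)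
  | awUp (n : ℕ) (b : Bool) : RuleInstance .awUp (.atom n b) .tt
  | acDown (n : ℕ) (b : Bool) :
      RuleInstance .acDown (.or (.atom n b) (.atom n b)) (.atom n b)
  | acUp (n : ℕ) (b : Bool) :
      RuleInstance .acUp (.atom n b) (.and (.atom n b) (.atom n b))
  | s (α β γ : Formula) :
      RuleInstance .s (.and α (.or β γ)) (.or (.and α β) γ)
  | m (α β γ δ : Formula) :
      RuleInstance .m (.or (.and α β) (.and γ δ)) (.and (.or α γ) (.or β δ))
  | eqOrComm (α β : Formula) : RuleInstance .eqOrComm (.or α β) (.or β α)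
  | eqAndComm (α β : Formula) : RuleInstance .eqAndComm (.and α β) (.and β α)
  | eqOrAssocL (α β γ : Formula) :
      RuleInstance .eqOrAssocL (.or (.or α β) γ) (.or α (.or β γ))
  | eqOrAssocR (α β γ : Formula) :
      RuleInstance .eqOrAssocR (.or α (.or β γ)) (.or (.or α β) γ)
  | eqAndAssocL (α β γ : Formula) :
      RuleInstance .eqAndAssocL (.and (.and α β) γ) (.and α (.and β γ))
  | eqAndAssocR (α β γ : Formula) :
      RuleInstance .eqAndAssocR (.and α (.and β γ)) (.and (.and α β) γ)
  | eqOrUnitDel (α : Formula) : RuleInstance .eqOrUnitDel (.or α .ff) α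
  | eqOrUnitAdd (α : Formula) : RuleInstance .eqOrUnitAdd α (.or α .ff)
  | eqAndUnitDel (α : Formula) : RuleInstance .eqAndUnitDel (.and α .tt) α
  | eqAndUnitAdd (α : Formula) : RuleInstance .eqAndUnitAdd α (.and α .tt)
  | eqTTDel : RuleInstance .eqTTDel (.or .tt .tt) .tt
  | eqTTAdd : RuleInstance .eqTTAdd .tt (.or .tt .tt)
  | eqFFDel : RuleInstance .eqFFDel (.and .ff .ff) .ff
  | eqFFAdd : RuleInstance .eqFFAdd .ff (.and .ff .ff)

/-- One (deep) inference step applying rule `r` at position `q`. -/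
def StepAt (r : RuleName) (q : List Bool) (φ ψ : Formula) : Prop :=
  ∃ γ δ, φ.sub q = some γ ∧ RuleInstance r γ δ ∧ ψ = φ.repl q δ

/-- One inference step using a rule from the set `S`. -/
def Step (S : Set RuleName) (φ ψ : Formula) : Prop :=
  ∃ r ∈ S, ∃ q, StepAt r q φ ψ

/-- There is a derivation from `φ` to `ψ` using only rules from `S`. -/
def Derives (S : Set RuleName) : Formula → Formula → Prop :=
  Relation.ReflTransGen (Step S)

/-! ### Derivations as explicit data (for the theory of atomic flows). -/

/-- A derivation: a premiss and a chain of steps, each recorded by its rule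
name, the position of the redex, and the resulting formula. -/
structure Deriv : Type where
  prem : Formula
  steps : List (RuleName × List Bool × Formula)

namespace Deriv

/-- The `i`-th step datum. -/
def stepAt (Φ : Deriv) (i : ℕ) : RuleName × List Bool × Formula :=
  Φ.steps.getD i (RuleName.s, ([] : List Bool), Formula.tt)

/-- The `i`-th formula of the derivation (`0` is the premiss). -/
def fml (Φ : Deriv) (i : ℕ) : Formula :=
  (Φ.prem :: Φ.steps.map (fun t => t.2.2)).getD i Φ.prem

/-- Number of formulae in the derivation. -/
def nf (Φ : Deriv) : ℕ := Φ.steps.length + 1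

/-- The conclusion of the derivation. -/
def concl (Φ : Deriv) : Formula := Φ.fml Φ.steps.length

/-- The derivation is well formed: every recorded step is a correct
inference step of SKS. -/
def WF (Φ : Deriv) : Prop :=
  ∀ i, i < Φ.steps.length →
    StepAt (Φ.stepAt i).1 (Φ.stepAt i).2.1 (Φ.fml i) (Φ.fml (i + 1))

end Deriv

/-! ### Atomic flows. -/

inductive FlowLabel : Type
  | aiDown | aiUp | awDown | awUp | acDown | acUp
  deriving DecidableEq

/-- Required (number of lower edges, number of upper edges) of a vertex. -/
def labDeg : FlowLabel → ℕ × ℕ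
  | .aiDown => (2, 0)
  | .aiUp => (0, 2)
  | .awDown => (1, 0)
  | .awUp => (0, 1)
  | .acDown => (1, 2)
  | .acUp => (2, 1)

/-- The data of an atomic flow: vertices, edges, labels, and the two
endpoint maps.  `up e = none` means the upper endpoint is `⊤`, and
`lo e = none` means the lower endpoint is `⊥`. -/
structure PreFlow : Type where
  V : Finset ℕ
  E : Finset ℕ
  η : ℕ → FlowLabel
  up : ℕ → Option ℕ
  lo : ℕ → Option ℕ

namespace PreFlow

/-- Lower edges of a vertex. -/
def Ledges (F : PreFlow) (v : ℕ) : Finset ℕ :=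
  F.E.filter (fun e => F.up e = some v)

/-- Upper edges of a vertex. -/
def Uedges (F : PreFlow) (v : ℕ) : Finset ℕ :=
  F.E.filter (fun e => F.lo e = some v)

/-- All edges of a vertex. -/
def edges (F : PreFlow) (v : ℕ) : Finset ℕ := F.Ledges v ∪ F.Uedges v

def degOK (F : PreFlow) : Prop :=
  ∀ v ∈ F.V, (F.Ledges v).card = (labDeg (F.η v)).1 ∧
    (F.Uedges v).card = (labDeg (F.η v)).2

def endpointsOK (F : PreFlow) : Prop :=
  ∀ e ∈ F.E, (∀ v, F.up e = some v → v ∈ F.V) ∧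
    (∀ v, F.lo e = some v → v ∈ F.V)

/-- No cyclic sequence of edges `ε₁, …, ε_h` with
`up (ε_i) = lo (ε_(i+1 mod h))`. -/
def Acyclic (F : PreFlow) : Prop :=
  ¬ ∃ (h : ℕ) (ε : Fin (h + 1) → ℕ), (∀ i, ε i ∈ F.E) ∧
      ∀ i : Fin (h + 1), (F.up (ε i)).isSome ∧ F.up (ε i) = F.lo (ε (i + 1))

/-- `π` is a polarity assignment (`false` = `−`, `true` = `+`). -/
def PolarityOK (F : PreFlow) (π : ℕ → Bool) : Prop :=
  ∀ v ∈ F.V,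
    ((F.η v = .acDown ∨ F.η v = .acUp) →
      ∀ e₁ ∈ F.edges v, ∀ e₂ ∈ F.edges v, π e₁ = π e₂) ∧
    ((F.η v = .aiDown ∨ F.η v = .aiUp) →
      ∃ e₁ ∈ F.edges v, ∃ e₂ ∈ F.edges v, π e₁ ≠ π e₂)

/-- `F` is an atomic flow. -/
def IsFlow (F : PreFlow) : Prop :=
  F.degOK ∧ F.endpointsOK ∧ F.Acyclic ∧ ∃ π, F.PolarityOK π

end PreFlow

/-! ### Paths, ai-paths, cycles. -/

/-- An endpoint of a path: a vertex, or `⊤`, or `⊥`. -/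
inductive VPt : Type
  | ver : ℕ → VPt
  | top : VPt
  | bot : VPt
  deriving DecidableEq

/-- The upper endpoint of edge `e` is `ν`. -/
def srcOK (F : PreFlow) (ν : VPt) (e : ℕ) : Prop :=
  match ν with
  | .ver v => F.up e = some v
  | .top => F.up e = none
  | .bot => False

/-- The lower endpoint of edge `e` is `ν`. -/
def tgtOK (F : PreFlow) (ν : VPt) (e : ℕ) : Prop :=
  match ν with
  | .ver v => F.lo e = some v
  | .bot => F.lo e = none
  | .top => False

/-- A downward path from `ν` to `ν'` (a nonempty sequence of edges, each
hanging from the lower endpoint of the previous one). -/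
def IsDownPath (F : PreFlow) (ν ν' : VPt) (l : List ℕ) : Prop :=
  l ≠ [] ∧ (∀ e ∈ l, e ∈ F.E) ∧
  (∀ i, i + 1 < l.length →
    ∃ v ∈ F.V, F.lo (l.getD i 0) = some v ∧ F.up (l.getD (i + 1) 0) = some v) ∧
  srcOK F ν (l.getD 0 0) ∧ tgtOK F ν' (l.getD (l.length - 1) 0)

/-- A path from `ν` to `ν'`: a downward path, or the reverse of a
downward path from `ν'` to `ν`. -/
def IsPath (F : PreFlow) (ν ν' : VPt) (l : List ℕ) : Prop :=
  IsDownPath F ν ν' l ∨ IsDownPath F ν' ν l.reverse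

/-- ai-paths: paths, closed under concatenation (in distinct edges) at
interaction and cointeraction vertices. -/
inductive AIPath (F : PreFlow) : VPt → VPt → List ℕ → Prop
  | single {ν ν' : VPt} {l : List ℕ} : IsPath F ν ν' l → AIPath F ν ν' l
  | join {ν ν' : VPt} {v : ℕ} {l₁ l₂ : List ℕ} {e e' : ℕ} :
      v ∈ F.V → (F.η v = .aiDown ∨ F.η v = .aiUp) →
      AIPath F ν (.ver v) (l₁ ++ [e]) →
      AIPath F (.ver v) ν' (e' :: l₂) →
      e ≠ e' →
      AIPath F ν ν' (l₁ ++ [e] ++ e' :: l₂)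

/-- The flow contains an ai-cycle: an ai-path from a vertex to itself in
which no edge appears twice. -/
def HasAICycle (F : PreFlow) : Prop :=
  ∃ v l, v ∈ F.V ∧ AIPath F (.ver v) (.ver v) l ∧ l.Nodup

def CycleFree (F : PreFlow) : Prop := ¬ HasAICycle F

/-- An ai-connection: a path from an interaction vertex to a cointeraction
vertex or vice versa. -/
def IsConnection (F : PreFlow) (l : List ℕ) : Prop :=
  ∃ v v', v ∈ F.V ∧ v' ∈ F.V ∧
    ((F.η v = .aiDown ∧ F.η v' = .aiUp) ∨
     (F.η v = .aiUp ∧ F.η v' = .aiDown)) ∧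
    IsPath F (.ver v) (.ver v') l

/-- A simple edge: an ai-connection consisting of a single edge. -/
def SimpleEdge (F : PreFlow) (e : ℕ) : Prop := IsConnection F [e]

/-- A clean path: an ai-path all of whose ai-connections are simple edges. -/
def IsCleanPath (F : PreFlow) (ν ν' : VPt) (l : List ℕ) : Prop :=
  AIPath F ν ν' l ∧
  ∀ l₁ l₂ l₃, l = l₁ ++ l₂ ++ l₃ → IsConnection F l₂ → l₂.length = 1

/-! ### Local flow reduction rules. -/

open PreFlow

/-- Rule `w↓-c↓`: a weakening feeding a contraction is erased, merging the
contraction's other two edges. -/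
def RedWdCd (A B : PreFlow) : Prop :=
  ∃ v₁ v₂ e e₂ e₃,
    v₁ ∈ A.V ∧ v₂ ∈ A.V ∧ v₁ ≠ v₂ ∧
    A.η v₁ = .awDown ∧ A.η v₂ = .acDown ∧
    e ∈ A.E ∧ e₂ ∈ A.E ∧ e₃ ∈ A.E ∧ e ≠ e₂ ∧ e ≠ e₃ ∧ e₂ ≠ e₃ ∧
    A.up e = some v₁ ∧ A.lo e = some v₂ ∧
    A.lo e₂ = some v₂ ∧ A.up e₃ = some v₂ ∧
    B.V = (A.V.erase v₁).erase v₂ ∧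
    B.E = (A.E.erase e).erase e₃ ∧
    B.η = A.η ∧ B.up = A.up ∧
    B.lo = Function.update A.lo e₂ (A.lo e₃)

/-- Rule `c↑-w↑` (dual of `w↓-c↓`). -/
def RedCuWu (A B : PreFlow) : Prop :=
  ∃ v₁ v₂ e e₂ e₃,
    v₁ ∈ A.V ∧ v₂ ∈ A.V ∧ v₁ ≠ v₂ ∧
    A.η v₁ = .awUp ∧ A.η v₂ = .acUp ∧
    e ∈ A.E ∧ e₂ ∈ A.E ∧ e₃ ∈ A.E ∧ e ≠ e₂ ∧ e ≠ e₃ ∧ e₂ ≠ e₃ ∧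
    A.lo e = some v₁ ∧ A.up e = some v₂ ∧
    A.up e₂ = some v₂ ∧ A.lo e₃ = some v₂ ∧
    B.V = (A.V.erase v₁).erase v₂ ∧
    B.E = (A.E.erase e).erase e₃ ∧
    B.η = A.η ∧ B.lo = A.lo ∧
    B.up = Function.update A.up e₂ (A.up e₃)

/-- Rule `w↓-i↑`: a weakening feeding a cointeraction is replaced by a
coweakening on the other cointeraction edge. -/
def RedWdIu (A B : PreFlow) : Prop :=
  ∃ v₁ v₂ e e₂,
    v₁ ∈ A.V ∧ v₂ ∈ A.V ∧ v₁ ≠ v₂ ∧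
    A.η v₁ = .awDown ∧ A.η v₂ = .aiUp ∧
    e ∈ A.E ∧ e₂ ∈ A.E ∧ e ≠ e₂ ∧
    A.up e = some v₁ ∧ A.lo e = some v₂ ∧ A.lo e₂ = some v₂ ∧
    B.V = A.V.erase v₁ ∧ B.E = A.E.erase e ∧
    B.η = Function.update A.η v₂ .awUp ∧
    B.up = A.up ∧ B.lo = A.lo

/-- Rule `i↓-w↑` (dual of `w↓-i↑`). -/
def RedIdWu (A B : PreFlow) : Prop :=
  ∃ v₁ v₂ e e₂,
    v₁ ∈ A.V ∧ v₂ ∈ A.V ∧ v₁ ≠ v₂ ∧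
    A.η v₁ = .awUp ∧ A.η v₂ = .aiDown ∧
    e ∈ A.E ∧ e₂ ∈ A.E ∧ e ≠ e₂ ∧
    A.lo e = some v₁ ∧ A.up e = some v₂ ∧ A.up e₂ = some v₂ ∧
    B.V = A.V.erase v₁ ∧ B.E = A.E.erase e ∧
    B.η = Function.update A.η v₂ .awDown ∧
    B.up = A.up ∧ B.lo = A.lo

/-- Rule `w↓-w↑`: a weakening joined to a coweakening is erased. -/
def RedWdWu (A B : PreFlow) : Prop :=
  ∃ v₁ v₂ e,
    v₁ ∈ A.V ∧ v₂ ∈ A.V ∧ v₁ ≠ v₂ ∧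
    A.η v₁ = .awDown ∧ A.η v₂ = .awUp ∧
    e ∈ A.E ∧ A.up e = some v₁ ∧ A.lo e = some v₂ ∧
    B.V = (A.V.erase v₁).erase v₂ ∧ B.E = A.E.erase e ∧
    B.η = A.η ∧ B.up = A.up ∧ B.lo = A.lo

/-- Rule `w↓-c↑`: a weakening feeding a cocontraction is replaced by two
weakenings. -/
def RedWdCu (A B : PreFlow) : Prop :=
  ∃ v₁ v₂ e e₁ e₂,
    v₁ ∈ A.V ∧ v₂ ∈ A.V ∧ v₁ ≠ v₂ ∧
    A.η v₁ = .awDown ∧ A.η v₂ = .acUp ∧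
    e ∈ A.E ∧ e₁ ∈ A.E ∧ e₂ ∈ A.E ∧ e ≠ e₁ ∧ e ≠ e₂ ∧ e₁ ≠ e₂ ∧
    A.up e = some v₁ ∧ A.lo e = some v₂ ∧
    A.up e₁ = some v₂ ∧ A.up e₂ = some v₂ ∧
    B.V = A.V ∧ B.E = A.E.erase e ∧
    B.η = Function.update A.η v₂ .awDown ∧
    B.up = Function.update A.up e₁ (some v₁) ∧
    B.lo = A.lo

/-- Rule `c↓-w↑` (dual of `w↓-c↑`). -/
def RedCdWu (A B : PreFlow) : Prop :=
  ∃ v₁ v₂ e e₁ e₂,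
    v₁ ∈ A.V ∧ v₂ ∈ A.V ∧ v₁ ≠ v₂ ∧
    A.η v₁ = .awUp ∧ A.η v₂ = .acDown ∧
    e ∈ A.E ∧ e₁ ∈ A.E ∧ e₂ ∈ A.E ∧ e ≠ e₁ ∧ e ≠ e₂ ∧ e₁ ≠ e₂ ∧
    A.lo e = some v₁ ∧ A.up e = some v₂ ∧
    A.lo e₁ = some v₂ ∧ A.lo e₂ = some v₂ ∧
    B.V = A.V ∧ B.E = A.E.erase e ∧
    B.η = Function.update A.η v₂ .awUp ∧
    B.lo = Function.update A.lo e₁ (some v₁) ∧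
    B.up = A.up

/-- Rule `c↓-i↑`: a contraction whose output edge enters a cointeraction is
replaced by a cocontraction on the other cointeraction edge followed by two
cointeractions. -/
def RedCdIu (A B : PreFlow) : Prop :=
  ∃ v₁ v₂ v₃ e e₁ e₂ e₃ g₁ g₂,
    v₁ ∈ A.V ∧ v₂ ∈ A.V ∧ v₁ ≠ v₂ ∧ v₃ ∉ A.V ∧
    A.η v₁ = .acDown ∧ A.η v₂ = .aiUp ∧
    e ∈ A.E ∧ e₁ ∈ A.E ∧ e₂ ∈ A.E ∧ e₃ ∈ A.E ∧
    e ≠ e₁ ∧ e ≠ e₂ ∧ e ≠ e₃ ∧ e₁ ≠ e₂ ∧ e₁ ≠ e₃ ∧ e₂ ≠ e₃ ∧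
    g₁ ∉ A.E ∧ g₂ ∉ A.E ∧ g₁ ≠ g₂ ∧
    A.lo e₁ = some v₁ ∧ A.lo e₂ = some v₁ ∧
    A.up e = some v₁ ∧ A.lo e = some v₂ ∧ A.lo e₃ = some v₂ ∧
    B.V = insert v₃ A.V ∧
    B.E = insert g₁ (insert g₂ (A.E.erase e)) ∧
    B.η = Function.update (Function.update A.η v₁ .acUp) v₃ .aiUp ∧
    B.up = Function.update (Function.update A.up g₁ (some v₁)) g₂ (some v₁) ∧
    B.lo = Function.update (Function.update (Function.update
      (Function.update (Function.update A.lo e₁ (some v₂)) e₂ (some v₃))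
        e₃ (some v₁)) g₁ (some v₂)) g₂ (some v₃)

/-- Rule `i↓-c↑` (dual of `c↓-i↑`). -/
def RedIdCu (A B : PreFlow) : Prop :=
  ∃ v₁ v₂ v₃ e e₁ e₂ e₃ g₁ g₂,
    v₁ ∈ A.V ∧ v₂ ∈ A.V ∧ v₁ ≠ v₂ ∧ v₃ ∉ A.V ∧
    A.η v₁ = .acUp ∧ A.η v₂ = .aiDown ∧
    e ∈ A.E ∧ e₁ ∈ A.E ∧ e₂ ∈ A.E ∧ e₃ ∈ A.E ∧
    e ≠ e₁ ∧ e ≠ e₂ ∧ e ≠ e₃ ∧ e₁ ≠ e₂ ∧ e₁ ≠ e₃ ∧ e₂ ≠ e₃ ∧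
    g₁ ∉ A.E ∧ g₂ ∉ A.E ∧ g₁ ≠ g₂ ∧
    A.up e₁ = some v₁ ∧ A.up e₂ = some v₁ ∧
    A.lo e = some v₁ ∧ A.up e = some v₂ ∧ A.up e₃ = some v₂ ∧
    B.V = insert v₃ A.V ∧
    B.E = insert g₁ (insert g₂ (A.E.erase e)) ∧
    B.η = Function.update (Function.update A.η v₁ .acDown) v₃ .aiDown ∧
    B.lo = Function.update (Function.update A.lo g₁ (some v₁)) g₂ (some v₁) ∧
    B.up = Function.update (Function.update (Function.update
      (Function.update (Function.update A.up e₁ (some v₂)) e₂ (some v₃))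
        e₃ (some v₁)) g₁ (some v₂)) g₂ (some v₃)

/-- Rule `c↓-c↑`: a contraction whose output enters a cocontraction is
replaced by two cocontractions above two contractions, crosswise connected. -/
def RedCdCu (A B : PreFlow) : Prop :=
  ∃ v₁ v₂ v₃ v₄ e e₁ e₂ e₃ e₄ g₁₁ g₁₂ g₂₁ g₂₂,
    v₁ ∈ A.V ∧ v₂ ∈ A.V ∧ v₁ ≠ v₂ ∧
    v₃ ∉ A.V ∧ v₄ ∉ A.V ∧ v₃ ≠ v₄ ∧
    A.η v₁ = .acDown ∧ A.η v₂ = .acUp ∧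
    e ∈ A.E ∧ e₁ ∈ A.E ∧ e₂ ∈ A.E ∧ e₃ ∈ A.E ∧ e₄ ∈ A.E ∧
    e ≠ e₁ ∧ e ≠ e₂ ∧ e ≠ e₃ ∧ e ≠ e₄ ∧
    e₁ ≠ e₂ ∧ e₁ ≠ e₃ ∧ e₁ ≠ e₄ ∧ e₂ ≠ e₃ ∧ e₂ ≠ e₄ ∧ e₃ ≠ e₄ ∧
    g₁₁ ∉ A.E ∧ g₁₂ ∉ A.E ∧ g₂₁ ∉ A.E ∧ g₂₂ ∉ A.E ∧
    g₁₁ ≠ g₁₂ ∧ g₁₁ ≠ g₂₁ ∧ g₁₁ ≠ g₂₂ ∧ g₁₂ ≠ g₂₁ ∧ g₁₂ ≠ g₂₂ ∧ g₂₁ ≠ g₂₂ ∧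
    A.lo e₁ = some v₁ ∧ A.lo e₂ = some v₁ ∧ A.up e = some v₁ ∧
    A.lo e = some v₂ ∧ A.up e₃ = some v₂ ∧ A.up e₄ = some v₂ ∧
    B.V = insert v₃ (insert v₄ A.V) ∧
    B.E = insert g₁₁ (insert g₁₂ (insert g₂₁ (insert g₂₂ (A.E.erase e)))) ∧
    B.η = Function.update (Function.update (Function.update
      (Function.update A.η v₁ .acUp) v₂ .acUp) v₃ .acDown) v₄ .acDown ∧
    B.up = Function.update (Function.update (Function.update
      (Function.update (Function.update (Function.update A.up
        e₃ (some v₃)) e₄ (some v₄)) g₁₁ (some v₁)) g₁₂ (some v₁))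
          g₂₁ (some v₂)) g₂₂ (some v₂) ∧
    B.lo = Function.update (Function.update (Function.update
      (Function.update (Function.update A.lo e₂ (some v₂)) g₁₁ (some v₃))
        g₁₂ (some v₄)) g₂₁ (some v₃)) g₂₂ (some v₄)

/-- One step of the flow rewriting system `w`. -/
def StepW (A B : PreFlow) : Prop :=
  RedWdCd A B ∨ RedCuWu A B ∨ RedWdIu A B ∨ RedIdWu A B ∨
  RedWdWu A B ∨ RedWdCu A B ∨ RedCdWu A B

/-- One step of the flow rewriting system `c`. -/
def StepC (A B : PreFlow) : Prop :=
  RedCdIu A B ∨ RedIdCu A B ∨ RedCdCu A B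

/-- `A` is normal for the flow rewriting system `w`. -/
def NormalW (A : PreFlow) : Prop := ¬ ∃ B, StepW A B

/-- `A` is normal for the flow rewriting system `c`. -/
def NormalC (A : PreFlow) : Prop := ¬ ∃ B, StepC A B

/-! ### Flow isomorphisms. -/

structure FlowIso (A B : PreFlow) : Type where
  vmap : ℕ → ℕ
  emap : ℕ → ℕ
  vbij : Set.BijOn vmap (A.V : Set ℕ) (B.V : Set ℕ)
  ebij : Set.BijOn emap (A.E : Set ℕ) (B.E : Set ℕ)
  lab : ∀ v ∈ A.V, B.η (vmap v) = A.η v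
  upc : ∀ e ∈ A.E, B.up (emap e) = (A.up e).map vmap
  loc : ∀ e ∈ A.E, B.lo (emap e) = (A.lo e).map vmap

/-! ### The global reduction `→se` (elimination of a simple edge). -/

/-- The flow obtained from `B` by eliminating the simple edge `e0` between
the interaction `vi` and the cointeraction `vc` (with `e2` the other lower
edge of `vi` and `e3` the other upper edge of `vc`): two copies (tags `0`,
hat, the lower one, and `1`, tilde, the upper one) of the remaining flow are
glued by identifying the hat copy of `e2` with the tilde copy of `e3`; a
weakening (vertex `(2,0)`) is placed above the tilde copy of `e2`, a
coweakening (vertex `(2,1)`) below the hat copy of `e3`; each upper edge `ε`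
of `B` gives a cocontraction (vertex `(3,ε)`, with a new upper edge `(3,ε)`)
joining the two copies of `ε`, and dually each lower edge `ε'` of `B` gives
a contraction (vertex `(4,ε')`, with a new lower edge `(4,ε')`). -/
def seFlow (B : PreFlow) (vi vc e0 e2 e3 : ℕ) : PreFlow :=
  { V := ((B.V.erase vi).erase vc).image (Nat.pair 0) ∪
         ((B.V.erase vi).erase vc).image (Nat.pair 1) ∪
         {Nat.pair 2 0, Nat.pair 2 1} ∪
         (B.E.filter (fun e => B.up e = none)).image (Nat.pair 3) ∪
         (B.E.filter (fun e => B.lo e = none)).image (Nat.pair 4),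
    E := (B.E.erase e0).image (Nat.pair 0) ∪
         (B.E.erase e0).image (fun e => if e = e3 then Nat.pair 0 e2 else Nat.pair 1 e) ∪
         (B.E.filter (fun e => B.up e = none)).image (Nat.pair 3) ∪
         (B.E.filter (fun e => B.lo e = none)).image (Nat.pair 4),
    η := fun x =>
      if (Nat.unpair x).1 = 2 then
        (if (Nat.unpair x).2 = 0 then FlowLabel.awDown else FlowLabel.awUp)
      else if (Nat.unpair x).1 = 3 then FlowLabel.acUp
      else if (Nat.unpair x).1 = 4 then FlowLabel.acDown
      else B.η (Nat.unpair x).2,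
    up := fun x =>
      let t := (Nat.unpair x).1
      let y := (Nat.unpair x).2
      if t = 0 then
        (if y = e2 then
          (match B.up e3 with
           | some v => some (Nat.pair 1 v)
           | none => some (Nat.pair 3 e3))
        else
          (match B.up y with
           | some v => some (Nat.pair 0 v)
           | none => some (Nat.pair 3 y)))
      else if t = 1 then
        (if y = e2 then some (Nat.pair 2 0)
        else
          (match B.up y with
           | some v => some (Nat.pair 1 v)
           | none => some (Nat.pair 3 y)))
      else if t = 3 then none
      else some (Nat.pair 4 y),
    lo := fun x =>
      let t := (Nat.unpair x).1
      let y := (Nat.unpair x).2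
      if t = 0 then
        (if y = e2 then
          (match B.lo e2 with
           | some v => some (Nat.pair 0 v)
           | none => some (Nat.pair 4 e2))
        else if y = e3 then some (Nat.pair 2 1)
        else
          (match B.lo y with
           | some v => some (Nat.pair 0 v)
           | none => some (Nat.pair 4 y)))
      else if t = 1 then
        (match B.lo y with
         | some v => some (Nat.pair 1 v)
         | none => some (Nat.pair 4 y))
      else if t = 3 then some (Nat.pair 3 y)
      else none }

/-- The reduction `→se`: elimination of a simple edge (up to flow
isomorphism). -/
def RedSE (B C : PreFlow) : Prop :=
  ∃ vi vc e0 e2 e3,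
    vi ∈ B.V ∧ vc ∈ B.V ∧ vi ≠ vc ∧
    B.η vi = .aiDown ∧ B.η vc = .aiUp ∧
    e0 ∈ B.E ∧ e2 ∈ B.E ∧ e3 ∈ B.E ∧
    e0 ≠ e2 ∧ e0 ≠ e3 ∧ e2 ≠ e3 ∧
    B.up e0 = some vi ∧ B.lo e0 = some vc ∧
    B.up e2 = some vi ∧ B.lo e3 = some vc ∧
    Nonempty (FlowIso C (seFlow B vi vc e0 e2 e3))

/-! ### The atomic flow associated with a derivation. -/

/-- Correspondence conditions for a linear rule applied at position `q`:
for each pair `(c₁, c₂)` in `cs`, occurrences at `q ++ c₁ ++ p` in the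
conclusion (formula `i+1`) are traced to occurrences at `q ++ c₂ ++ p` in
the premiss (formula `i`). -/
def corrCond (f : ℕ → List Bool → ℕ) (i : ℕ) (q : List Bool) (ψ : Formula)
    (cs : List (List Bool × List Bool)) : Prop :=
  ∀ c ∈ cs, ∀ p : List Bool, ψ.IsOcc (q ++ c.1 ++ p) →
    f (i + 1) (q ++ c.1 ++ p) = f i (q ++ c.2 ++ p)

/-- The tracing conditions for one inference step: occurrences in the
context are traced to the same edge, and the active occurrences of a
structural rule are related to the edges of the vertex `v` as prescribed by
its label, while the active occurrences of logical and `=` steps are traced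
to the same edges under the canonical correspondence. -/
def stepCond (A : PreFlow) (f : ℕ → List Bool → ℕ) (v : ℕ) (i : ℕ)
    (r : RuleName) (q : List Bool) (φ ψ : Formula) : Prop :=
  (∀ p, ¬ (q <+: p) → φ.IsOcc p → f (i + 1) p = f i p) ∧
  match r with
  | .aiDown =>
      A.η v = .aiDown ∧
      A.up (f (i + 1) (q ++ [false])) = some v ∧
      A.up (f (i + 1) (q ++ [true])) = some v ∧
      f (i + 1) (q ++ [false]) ≠ f (i + 1) (q ++ [true])
  | .aiUp =>
      A.η v = .aiUp ∧
      A.lo (f i (q ++ [false])) = some v ∧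
      A.lo (f i (q ++ [true])) = some v ∧
      f i (q ++ [false]) ≠ f i (q ++ [true])
  | .awDown => A.η v = .awDown ∧ A.up (f (i + 1) q) = some v
  | .awUp => A.η v = .awUp ∧ A.lo (f i q) = some v
  | .acDown =>
      A.η v = .acDown ∧
      A.lo (f i (q ++ [false])) = some v ∧
      A.lo (f i (q ++ [true])) = some v ∧
      A.up (f (i + 1) q) = some v ∧
      f i (q ++ [false]) ≠ f i (q ++ [true])
  | .acUp =>
      A.η v = .acUp ∧
      A.lo (f i q) = some v ∧
      A.up (f (i + 1) (q ++ [false])) = some v ∧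
      A.up (f (i + 1) (q ++ [true])) = some v ∧
      f (i + 1) (q ++ [false]) ≠ f (i + 1) (q ++ [true])
  | .s => corrCond f i q ψ
      [([false, false], [false]), ([false, true], [true, false]),
       ([true], [true, true])]
  | .m => corrCond f i q ψ
      [([false, false], [false, false]), ([true, false], [false, true]),
       ([false, true], [true, false]), ([true, true], [true, true])]
  | .eqOrComm => corrCond f i q ψ [([false], [true]), ([true], [false])]
  | .eqAndComm => corrCond f i q ψ [([false], [true]), ([true], [false])]
  | .eqOrAssocL => corrCond f i q ψ
      [([false], [false, false]), ([true, false], [false, true]),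
       ([true, true], [true])]
  | .eqOrAssocR => corrCond f i q ψ
      [([false, false], [false]), ([false, true], [true, false]),
       ([true], [true, true])]
  | .eqAndAssocL => corrCond f i q ψ
      [([false], [false, false]), ([true, false], [false, true]),
       ([true, true], [true])]
  | .eqAndAssocR => corrCond f i q ψ
      [([false, false], [false]), ([false, true], [true, false]),
       ([true], [true, true])]
  | .eqOrUnitDel => corrCond f i q ψ [([], [false])]
  | .eqOrUnitAdd => corrCond f i q ψ [([false], [])]
  | .eqAndUnitDel => corrCond f i q ψ [([], [false])]
  | .eqAndUnitAdd => corrCond f i q ψ [([false], [])]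
  | .eqTTDel => True
  | .eqTTAdd => True
  | .eqFFDel => True
  | .eqFFAdd => True

/-- `A` is the atomic flow associated with the derivation `Φ`, where `f`
maps each atom occurrence (formula index, position) of `Φ` to an edge of
`A`, and `g` assigns to each structural inference step its vertex. -/
def IsAssocFlow (Φ : Deriv) (A : PreFlow) (f : ℕ → List Bool → ℕ)
    (g : ℕ → ℕ) : Prop :=
  Φ.WF ∧ A.IsFlow ∧
  (∀ i p, i < Φ.nf → (Φ.fml i).IsOcc p → f i p ∈ A.E) ∧
  (∀ e ∈ A.E, ∃ i p, i < Φ.nf ∧ (Φ.fml i).IsOcc p ∧ f i p = e) ∧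
  (∀ i p p', i < Φ.nf → (Φ.fml i).IsOcc p → (Φ.fml i).IsOcc p' →
    f i p = f i p' → p = p') ∧
  (∀ p, (Φ.fml 0).IsOcc p → A.up (f 0 p) = none) ∧
  (∀ p, (Φ.fml Φ.steps.length).IsOcc p → A.lo (f Φ.steps.length p) = none) ∧
  (∀ i, i < Φ.steps.length → (Φ.stepAt i).1.isStructural = true → g i ∈ A.V) ∧
  (∀ v ∈ A.V, ∃ i, i < Φ.steps.length ∧
    (Φ.stepAt i).1.isStructural = true ∧ g i = v) ∧
  (∀ i j, i < Φ.steps.length → j < Φ.steps.length →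
    (Φ.stepAt i).1.isStructural = true → (Φ.stepAt j).1.isStructural = true →
    g i = g j → i = j) ∧
  (∀ i, i < Φ.steps.length →
    stepCond A f (g i) i (Φ.stepAt i).1 (Φ.stepAt i).2.1
      (Φ.fml i) (Φ.fml (i + 1)))

/-! ### Streamlining. -/

/-- No path from an interaction or weakening vertex to a cointeraction or
coweakening vertex. -/
def NoIWPath (A : PreFlow) : Prop :=
  ¬ ∃ v v' l, v ∈ A.V ∧ v' ∈ A.V ∧
      (A.η v = .aiDown ∨ A.η v = .awDown) ∧
      (A.η v' = .aiUp ∨ A.η v' = .awUp) ∧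
      IsPath A (.ver v) (.ver v') l

/-- `Φ` is a streamlined derivation. -/
def Streamlined (Φ : Deriv) : Prop :=
  ∃ A f g, IsAssocFlow Φ A f g ∧ NoIWPath A

/-- `Φ` is a super-streamlined derivation. -/
def SuperStreamlined (Φ : Deriv) : Prop :=
  ∃ A f g, IsAssocFlow Φ A f g ∧ NoIWPath A ∧ NormalW A

/-- `Φ` is a hyper-streamlined derivation. -/
def HyperStreamlined (Φ : Deriv) : Prop :=
  ∃ A f g, IsAssocFlow Φ A f g ∧ NoIWPath A ∧ NormalW A ∧ NormalC A

end AF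

namespace AF

/-! ## Auxiliary development -/

namespace Formula

theorem sub_append (q s : List Bool) (φ : Formula) :
    φ.sub (q ++ s) = (φ.sub q).bind (fun γ => γ.sub s) := by
  induction q generalizing φ with
  | nil => simp [sub]
  | cons x q ih =>
    cases φ <;> cases x <;> simp [sub, ih]

theorem sub_repl_prefix {φ γ : Formula} {q : List Bool} (δ : Formula)
    (h : φ.sub q = some γ) (s : List Bool) :
    (φ.repl q δ).sub (q ++ s) = δ.sub s := by
  induction q generalizing φ with
  | nil => simp [repl]
  | cons x q ih =>
    cases φ <;> cases x <;> simp_all [sub, repl]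

theorem sub_repl_not_prefix {φ γ : Formula} {q p : List Bool} (δ : Formula)
    (h : φ.sub q = some γ) (hnp : ¬ q <+: p) (n : ℕ) (b : Bool) :
    (φ.repl q δ).sub p = some (.atom n b) ↔ φ.sub p = some (.atom n b) := by
  induction q generalizing φ p with
  | nil => exact absurd (List.nil_prefix) hnp
  | cons x q ih =>
    cases φ <;> cases x <;> simp_all [sub, repl] <;>
    · rcases p with _ | ⟨y, p⟩
      · simp [sub]
      · cases y <;> simp_all [sub, List.cons_prefix_cons]

/-- List of atom occurrence positions. -/
def occList : Formula → List (List Bool)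
  | .tt => []
  | .ff => []
  | .atom _ _ => [[]]
  | .or α β => (occList α).map (false :: ·) ++ (occList β).map (true :: ·)
  | .and α β => (occList α).map (false :: ·) ++ (occList β).map (true :: ·)

theorem mem_occList {φ : Formula} {p : List Bool} :
    p ∈ φ.occList ↔ φ.IsOcc p := by
  induction φ generalizing p with
  | tt =>
    simp only [occList, List.not_mem_nil, false_iff, IsOcc]
    rintro ⟨n, b, h⟩; cases p <;> simp [sub] at h
  | ff =>
    simp only [occList, List.not_mem_nil, false_iff, IsOcc]
    rintro ⟨n, b, h⟩; cases p <;> simp [sub] at h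
  | atom n b =>
    simp only [occList, List.mem_singleton, IsOcc]
    constructor
    · rintro rfl; exact ⟨n, b, rfl⟩
    · rintro ⟨n', b', h⟩; cases p with
      | nil => rfl
      | cons y p => cases y <;> simp [sub] at h
  | or α β ihα ihβ =>
    simp only [occList, List.mem_append, List.mem_map, IsOcc]
    constructor
    · rintro (⟨p', hp', rfl⟩ | ⟨p', hp', rfl⟩)
      · obtain ⟨n, b, h⟩ := ihα.1 hp'; exact ⟨n, b, h⟩
      · obtain ⟨n, b, h⟩ := ihβ.1 hp'; exact ⟨n, b, h⟩
    · rintro ⟨n, b, h⟩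
      cases p with
      | nil => simp [sub] at h
      | cons y p =>
        cases y
        · exact Or.inl ⟨p, ihα.2 ⟨n, b, h⟩, rfl⟩
        · exact Or.inr ⟨p, ihβ.2 ⟨n, b, h⟩, rfl⟩
  | and α β ihα ihβ =>
    simp only [occList, List.mem_append, List.mem_map, IsOcc]
    constructor
    · rintro (⟨p', hp', rfl⟩ | ⟨p', hp', rfl⟩)
      · obtain ⟨n, b, h⟩ := ihα.1 hp'; exact ⟨n, b, h⟩
      · obtain ⟨n, b, h⟩ := ihβ.1 hp'; exact ⟨n, b, h⟩
    · rintro ⟨n, b, h⟩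
      cases p with
      | nil => simp [sub] at h
      | cons y p =>
        cases y
        · exact Or.inl ⟨p, ihα.2 ⟨n, b, h⟩, rfl⟩
        · exact Or.inr ⟨p, ihβ.2 ⟨n, b, h⟩, rfl⟩

end Formula
/-- Correspondence pairs for each rule (matching `stepCond`). -/
def ruleCorr : RuleName → List (List Bool × List Bool)
  | .s => [([false, false], [false]), ([false, true], [true, false]),
       ([true], [true, true])]
  | .m => [([false, false], [false, false]), ([true, false], [false, true]),
       ([false, true], [true, false]), ([true, true], [true, true])]
  | .eqOrComm => [([false], [true]), ([true], [false])]
  | .eqAndComm => [([false], [true]), ([true], [false])]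
  | .eqOrAssocL => [([false], [false, false]), ([true, false], [false, true]),
       ([true, true], [true])]
  | .eqOrAssocR => [([false, false], [false]), ([false, true], [true, false]),
       ([true], [true, true])]
  | .eqAndAssocL => [([false], [false, false]), ([true, false], [false, true]),
       ([true, true], [true])]
  | .eqAndAssocR => [([false, false], [false]), ([false, true], [true, false]),
       ([true], [true, true])]
  | .eqOrUnitDel => [([], [false])]
  | .eqOrUnitAdd => [([false], [])]
  | .eqAndUnitDel => [([], [false])]
  | .eqAndUnitAdd => [([false], [])]
  | _ => []

/-- Positions (relative to the redex) of atoms created by a rule. -/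
def ruleNew : RuleName → List (List Bool)
  | .aiDown => [[false], [true]]
  | .awDown => [[]]
  | .acDown => [[]]
  | .acUp => [[false], [true]]
  | _ => []

/-- Positions (relative to the redex) of atoms killed by a rule. -/
def ruleDead : RuleName → List (List Bool)
  | .aiUp => [[false], [true]]
  | .awUp => [[]]
  | .acDown => [[false], [true]]
  | .acUp => [[]]
  | _ => []

def labelOf : RuleName → FlowLabel
  | .aiDown => .aiDown
  | .aiUp => .aiUp
  | .awDown => .awDown
  | .awUp => .awUp
  | .acDown => .acDown
  | .acUp => .acUp
  | _ => .aiDown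

/-- Both components of the correspondence lists are pairwise prefix-free. -/
def PF (l : List (List Bool × List Bool)) : Prop :=
  l.Pairwise (fun a b => ¬ (a.1 <+: b.1) ∧ ¬ (b.1 <+: a.1) ∧
    ¬ (a.2 <+: b.2) ∧ ¬ (b.2 <+: a.2))

theorem pf_ruleCorr (r : RuleName) : PF (ruleCorr r) := by
  cases r <;> simp [PF, ruleCorr] <;> decide

theorem ruleNew_structural {r : RuleName} (h : ruleNew r ≠ []) :
    r.isStructural = true := by cases r <;> simp_all [ruleNew, RuleName.isStructural]

theorem ruleDead_structural {r : RuleName} (h : ruleDead r ≠ []) :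
    r.isStructural = true := by cases r <;> simp_all [ruleDead, RuleName.isStructural]

theorem ruleCorr_structural {r : RuleName} (h : r.isStructural = true) :
    ruleCorr r = [] := by cases r <;> simp_all [ruleCorr, RuleName.isStructural]

theorem ruleDead_not_structural {r : RuleName} (h : r.isStructural = false) :
    ruleDead r = [] := by cases r <;> simp_all [ruleDead, RuleName.isStructural]
theorem corr_case1 {r : RuleName} {γ : Formula} {c} (hc : c ∈ ruleCorr r)
    {p p' : List Bool} {n : ℕ} {b : Bool} (hp : p = c.1 ++ p')
    (hs : γ.sub (c.2 ++ p') = some (.atom n b)) :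
    (∃ c ∈ ruleCorr r, ∃ p', p = c.1 ++ p' ∧ γ.sub (c.2 ++ p') = some (.atom n b)) ∨
      p ∈ ruleNew r := Or.inl ⟨c, hc, p', hp, hs⟩

theorem corr_case2 {r : RuleName} {δ : Formula} {c} (hc : c ∈ ruleCorr r)
    {p p' : List Bool} {n : ℕ} {b : Bool} (hp : p = c.2 ++ p')
    (hs : δ.sub (c.1 ++ p') = some (.atom n b)) :
    (∃ c ∈ ruleCorr r, ∃ p', p = c.2 ++ p' ∧ δ.sub (c.1 ++ p') = some (.atom n b)) ∨
      p ∈ ruleDead r := Or.inl ⟨c, hc, p', hp, hs⟩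

/-- Classification of atom occurrences in the contractum of a rule. -/
theorem rule_R1 {r : RuleName} {γ δ : Formula} (h : RuleInstance r γ δ)
    {p : List Bool} {n : ℕ} {b : Bool} (hp : δ.sub p = some (.atom n b)) :
    (∃ c ∈ ruleCorr r, ∃ p', p = c.1 ++ p' ∧ γ.sub (c.2 ++ p') = some (.atom n b)) ∨
      p ∈ ruleNew r := by
  cases h with
  | aiDown n₀ b₀ =>
      right; rcases p with _ | ⟨_ | _, _ | ⟨y, p⟩⟩ <;> simp_all [Formula.sub, ruleNew]
  | aiUp n₀ b₀ => exfalso; rcases p with _ | ⟨x, p⟩ <;> simp_all [Formula.sub]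
  | awDown n₀ b₀ => right; rcases p with _ | ⟨x, p⟩ <;> simp_all [Formula.sub, ruleNew]
  | awUp n₀ b₀ => exfalso; rcases p with _ | ⟨x, p⟩ <;> simp_all [Formula.sub]
  | acDown n₀ b₀ => right; rcases p with _ | ⟨x, p⟩ <;> simp_all [Formula.sub, ruleNew]
  | acUp n₀ b₀ =>
      right; rcases p with _ | ⟨_ | _, _ | ⟨y, p⟩⟩ <;> simp_all [Formula.sub, ruleNew]
  | s α β γ' =>
      rcases p with _ | ⟨_ | _, p⟩
      · simp [Formula.sub] at hp
      · simp only [Formula.sub] at hp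
        rcases p with _ | ⟨_ | _, p⟩
        · simp [Formula.sub] at hp
        · exact corr_case1 (c := ([false, false], [false])) (by simp [ruleCorr]) rfl
            (by simpa [Formula.sub] using hp)
        · exact corr_case1 (c := ([false, true], [true, false])) (by simp [ruleCorr]) rfl
            (by simpa [Formula.sub] using hp)
      · exact corr_case1 (c := ([true], [true, true])) (by simp [ruleCorr]) rfl
          (by simpa [Formula.sub] using hp)
  | m α β γ' δ' =>
      rcases p with _ | ⟨_ | _, p⟩
      · simp [Formula.sub] at hp
      · simp only [Formula.sub] at hp
        rcases p with _ | ⟨_ | _, p⟩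
        · simp [Formula.sub] at hp
        · exact corr_case1 (c := ([false, false], [false, false])) (by simp [ruleCorr]) rfl
            (by simpa [Formula.sub] using hp)
        · exact corr_case1 (c := ([false, true], [true, false])) (by simp [ruleCorr]) rfl
            (by simpa [Formula.sub] using hp)
      · simp only [Formula.sub] at hp
        rcases p with _ | ⟨_ | _, p⟩
        · simp [Formula.sub] at hp
        · exact corr_case1 (c := ([true, false], [false, true])) (by simp [ruleCorr]) rfl
            (by simpa [Formula.sub] using hp)
        · exact corr_case1 (c := ([true, true], [true, true])) (by simp [ruleCorr]) rfl
            (by simpa [Formula.sub] using hp)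
  | eqOrComm α β =>
      rcases p with _ | ⟨_ | _, p⟩
      · simp [Formula.sub] at hp
      · exact corr_case1 (c := ([false], [true])) (by simp [ruleCorr]) rfl
          (by simpa [Formula.sub] using hp)
      · exact corr_case1 (c := ([true], [false])) (by simp [ruleCorr]) rfl
          (by simpa [Formula.sub] using hp)
  | eqAndComm α β =>
      rcases p with _ | ⟨_ | _, p⟩
      · simp [Formula.sub] at hp
      · exact corr_case1 (c := ([false], [true])) (by simp [ruleCorr]) rfl
          (by simpa [Formula.sub] using hp)
      · exact corr_case1 (c := ([true], [false])) (by simp [ruleCorr]) rfl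
          (by simpa [Formula.sub] using hp)
  | eqOrAssocL α β γ' =>
      rcases p with _ | ⟨_ | _, p⟩
      · simp [Formula.sub] at hp
      · exact corr_case1 (c := ([false], [false, false])) (by simp [ruleCorr]) rfl
          (by simpa [Formula.sub] using hp)
      · simp only [Formula.sub] at hp
        rcases p with _ | ⟨_ | _, p⟩
        · simp [Formula.sub] at hp
        · exact corr_case1 (c := ([true, false], [false, true])) (by simp [ruleCorr]) rfl
            (by simpa [Formula.sub] using hp)
        · exact corr_case1 (c := ([true, true], [true])) (by simp [ruleCorr]) rfl
            (by simpa [Formula.sub] using hp)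
  | eqOrAssocR α β γ' =>
      rcases p with _ | ⟨_ | _, p⟩
      · simp [Formula.sub] at hp
      · simp only [Formula.sub] at hp
        rcases p with _ | ⟨_ | _, p⟩
        · simp [Formula.sub] at hp
        · exact corr_case1 (c := ([false, false], [false])) (by simp [ruleCorr]) rfl
            (by simpa [Formula.sub] using hp)
        · exact corr_case1 (c := ([false, true], [true, false])) (by simp [ruleCorr]) rfl
            (by simpa [Formula.sub] using hp)
      · exact corr_case1 (c := ([true], [true, true])) (by simp [ruleCorr]) rfl
          (by simpa [Formula.sub] using hp)
  | eqAndAssocL α β γ' =>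
      rcases p with _ | ⟨_ | _, p⟩
      · simp [Formula.sub] at hp
      · exact corr_case1 (c := ([false], [false, false])) (by simp [ruleCorr]) rfl
          (by simpa [Formula.sub] using hp)
      · simp only [Formula.sub] at hp
        rcases p with _ | ⟨_ | _, p⟩
        · simp [Formula.sub] at hp
        · exact corr_case1 (c := ([true, false], [false, true])) (by simp [ruleCorr]) rfl
            (by simpa [Formula.sub] using hp)
        · exact corr_case1 (c := ([true, true], [true])) (by simp [ruleCorr]) rfl
            (by simpa [Formula.sub] using hp)
  | eqAndAssocR α β γ' =>
      rcases p with _ | ⟨_ | _, p⟩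
      · simp [Formula.sub] at hp
      · simp only [Formula.sub] at hp
        rcases p with _ | ⟨_ | _, p⟩
        · simp [Formula.sub] at hp
        · exact corr_case1 (c := ([false, false], [false])) (by simp [ruleCorr]) rfl
            (by simpa [Formula.sub] using hp)
        · exact corr_case1 (c := ([false, true], [true, false])) (by simp [ruleCorr]) rfl
            (by simpa [Formula.sub] using hp)
      · exact corr_case1 (c := ([true], [true, true])) (by simp [ruleCorr]) rfl
          (by simpa [Formula.sub] using hp)
  | eqOrUnitDel α =>
      exact corr_case1 (c := ([], [false])) (by simp [ruleCorr]) rfl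
        (by simpa [Formula.sub] using hp)
  | eqOrUnitAdd α =>
      rcases p with _ | ⟨_ | _, p⟩
      · simp [Formula.sub] at hp
      · exact corr_case1 (c := ([false], [])) (by simp [ruleCorr]) rfl
          (by simpa [Formula.sub] using hp)
      · exfalso; rcases p with _ | ⟨y, p⟩ <;> simp_all [Formula.sub]
  | eqAndUnitDel α =>
      exact corr_case1 (c := ([], [false])) (by simp [ruleCorr]) rfl
        (by simpa [Formula.sub] using hp)
  | eqAndUnitAdd α =>
      rcases p with _ | ⟨_ | _, p⟩
      · simp [Formula.sub] at hp
      · exact corr_case1 (c := ([false], [])) (by simp [ruleCorr]) rfl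
          (by simpa [Formula.sub] using hp)
      · exfalso; rcases p with _ | ⟨y, p⟩ <;> simp_all [Formula.sub]
  | eqTTDel => exfalso; rcases p with _ | ⟨x, p⟩ <;> simp_all [Formula.sub]
  | eqTTAdd => exfalso; rcases p with _ | ⟨_ | _, _ | ⟨y, p⟩⟩ <;> simp_all [Formula.sub]
  | eqFFDel => exfalso; rcases p with _ | ⟨x, p⟩ <;> simp_all [Formula.sub]
  | eqFFAdd => exfalso; rcases p with _ | ⟨_ | _, _ | ⟨y, p⟩⟩ <;> simp_all [Formula.sub]
/-- Classification of atom occurrences in the redex of a rule. -/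
theorem rule_R2 {r : RuleName} {γ δ : Formula} (h : RuleInstance r γ δ)
    {p : List Bool} {n : ℕ} {b : Bool} (hp : γ.sub p = some (.atom n b)) :
    (∃ c ∈ ruleCorr r, ∃ p', p = c.2 ++ p' ∧ δ.sub (c.1 ++ p') = some (.atom n b)) ∨
      p ∈ ruleDead r := by
  cases h with
  | aiDown n₀ b₀ => exfalso; rcases p with _ | ⟨x, p⟩ <;> simp_all [Formula.sub]
  | aiUp n₀ b₀ =>
      right; rcases p with _ | ⟨_ | _, _ | ⟨y, p⟩⟩ <;> simp_all [Formula.sub, ruleDead]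
  | awDown n₀ b₀ => exfalso; rcases p with _ | ⟨x, p⟩ <;> simp_all [Formula.sub]
  | awUp n₀ b₀ => right; rcases p with _ | ⟨x, p⟩ <;> simp_all [Formula.sub, ruleDead]
  | acDown n₀ b₀ =>
      right; rcases p with _ | ⟨_ | _, _ | ⟨y, p⟩⟩ <;> simp_all [Formula.sub, ruleDead]
  | acUp n₀ b₀ => right; rcases p with _ | ⟨x, p⟩ <;> simp_all [Formula.sub, ruleDead]
  | s α β γ' =>
      rcases p with _ | ⟨_ | _, p⟩
      · simp [Formula.sub] at hp
      · exact corr_case2 (c := ([false, false], [false])) (by simp [ruleCorr]) rfl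
          (by simpa [Formula.sub] using hp)
      · simp only [Formula.sub] at hp
        rcases p with _ | ⟨_ | _, p⟩
        · simp [Formula.sub] at hp
        · exact corr_case2 (c := ([false, true], [true, false])) (by simp [ruleCorr]) rfl
            (by simpa [Formula.sub] using hp)
        · exact corr_case2 (c := ([true], [true, true])) (by simp [ruleCorr]) rfl
            (by simpa [Formula.sub] using hp)
  | m α β γ' δ' =>
      rcases p with _ | ⟨_ | _, p⟩
      · simp [Formula.sub] at hp
      · simp only [Formula.sub] at hp
        rcases p with _ | ⟨_ | _, p⟩
        · simp [Formula.sub] at hp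
        · exact corr_case2 (c := ([false, false], [false, false])) (by simp [ruleCorr]) rfl
            (by simpa [Formula.sub] using hp)
        · exact corr_case2 (c := ([true, false], [false, true])) (by simp [ruleCorr]) rfl
            (by simpa [Formula.sub] using hp)
      · simp only [Formula.sub] at hp
        rcases p with _ | ⟨_ | _, p⟩
        · simp [Formula.sub] at hp
        · exact corr_case2 (c := ([false, true], [true, false])) (by simp [ruleCorr]) rfl
            (by simpa [Formula.sub] using hp)
        · exact corr_case2 (c := ([true, true], [true, true])) (by simp [ruleCorr]) rfl
            (by simpa [Formula.sub] using hp)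
  | eqOrComm α β =>
      rcases p with _ | ⟨_ | _, p⟩
      · simp [Formula.sub] at hp
      · exact corr_case2 (c := ([true], [false])) (by simp [ruleCorr]) rfl
          (by simpa [Formula.sub] using hp)
      · exact corr_case2 (c := ([false], [true])) (by simp [ruleCorr]) rfl
          (by simpa [Formula.sub] using hp)
  | eqAndComm α β =>
      rcases p with _ | ⟨_ | _, p⟩
      · simp [Formula.sub] at hp
      · exact corr_case2 (c := ([true], [false])) (by simp [ruleCorr]) rfl
          (by simpa [Formula.sub] using hp)
      · exact corr_case2 (c := ([false], [true])) (by simp [ruleCorr]) rfl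
          (by simpa [Formula.sub] using hp)
  | eqOrAssocL α β γ' =>
      rcases p with _ | ⟨_ | _, p⟩
      · simp [Formula.sub] at hp
      · simp only [Formula.sub] at hp
        rcases p with _ | ⟨_ | _, p⟩
        · simp [Formula.sub] at hp
        · exact corr_case2 (c := ([false], [false, false])) (by simp [ruleCorr]) rfl
            (by simpa [Formula.sub] using hp)
        · exact corr_case2 (c := ([true, false], [false, true])) (by simp [ruleCorr]) rfl
            (by simpa [Formula.sub] using hp)
      · exact corr_case2 (c := ([true, true], [true])) (by simp [ruleCorr]) rfl
          (by simpa [Formula.sub] using hp)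
  | eqOrAssocR α β γ' =>
      rcases p with _ | ⟨_ | _, p⟩
      · simp [Formula.sub] at hp
      · exact corr_case2 (c := ([false, false], [false])) (by simp [ruleCorr]) rfl
          (by simpa [Formula.sub] using hp)
      · simp only [Formula.sub] at hp
        rcases p with _ | ⟨_ | _, p⟩
        · simp [Formula.sub] at hp
        · exact corr_case2 (c := ([false, true], [true, false])) (by simp [ruleCorr]) rfl
            (by simpa [Formula.sub] using hp)
        · exact corr_case2 (c := ([true], [true, true])) (by simp [ruleCorr]) rfl
            (by simpa [Formula.sub] using hp)
  | eqAndAssocL α β γ' =>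
      rcases p with _ | ⟨_ | _, p⟩
      · simp [Formula.sub] at hp
      · simp only [Formula.sub] at hp
        rcases p with _ | ⟨_ | _, p⟩
        · simp [Formula.sub] at hp
        · exact corr_case2 (c := ([false], [false, false])) (by simp [ruleCorr]) rfl
            (by simpa [Formula.sub] using hp)
        · exact corr_case2 (c := ([true, false], [false, true])) (by simp [ruleCorr]) rfl
            (by simpa [Formula.sub] using hp)
      · exact corr_case2 (c := ([true, true], [true])) (by simp [ruleCorr]) rfl
          (by simpa [Formula.sub] using hp)
  | eqAndAssocR α β γ' =>
      rcases p with _ | ⟨_ | _, p⟩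
      · simp [Formula.sub] at hp
      · exact corr_case2 (c := ([false, false], [false])) (by simp [ruleCorr]) rfl
          (by simpa [Formula.sub] using hp)
      · simp only [Formula.sub] at hp
        rcases p with _ | ⟨_ | _, p⟩
        · simp [Formula.sub] at hp
        · exact corr_case2 (c := ([false, true], [true, false])) (by simp [ruleCorr]) rfl
            (by simpa [Formula.sub] using hp)
        · exact corr_case2 (c := ([true], [true, true])) (by simp [ruleCorr]) rfl
            (by simpa [Formula.sub] using hp)
  | eqOrUnitDel α =>
      rcases p with _ | ⟨_ | _, p⟩
      · simp [Formula.sub] at hp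
      · exact corr_case2 (c := ([], [false])) (by simp [ruleCorr]) rfl
          (by simpa [Formula.sub] using hp)
      · exfalso; rcases p with _ | ⟨y, p⟩ <;> simp_all [Formula.sub]
  | eqOrUnitAdd α =>
      exact corr_case2 (c := ([false], [])) (by simp [ruleCorr]) rfl
        (by simpa [Formula.sub] using hp)
  | eqAndUnitDel α =>
      rcases p with _ | ⟨_ | _, p⟩
      · simp [Formula.sub] at hp
      · exact corr_case2 (c := ([], [false])) (by simp [ruleCorr]) rfl
          (by simpa [Formula.sub] using hp)
      · exfalso; rcases p with _ | ⟨y, p⟩ <;> simp_all [Formula.sub]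
  | eqAndUnitAdd α =>
      exact corr_case2 (c := ([false], [])) (by simp [ruleCorr]) rfl
        (by simpa [Formula.sub] using hp)
  | eqTTDel => exfalso; rcases p with _ | ⟨_ | _, _ | ⟨y, p⟩⟩ <;> simp_all [Formula.sub]
  | eqTTAdd => exfalso; rcases p with _ | ⟨x, p⟩ <;> simp_all [Formula.sub]
  | eqFFDel => exfalso; rcases p with _ | ⟨_ | _, _ | ⟨y, p⟩⟩ <;> simp_all [Formula.sub]
  | eqFFAdd => exfalso; rcases p with _ | ⟨x, p⟩ <;> simp_all [Formula.sub]

/-- New positions are atom occurrences of the contractum. -/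
theorem rule_R3new {r : RuleName} {γ δ : Formula} (h : RuleInstance r γ δ)
    {c : List Bool} (hc : c ∈ ruleNew r) : ∃ n b, δ.sub c = some (.atom n b) := by
  cases h <;>
    simp only [ruleNew, List.mem_singleton, List.mem_cons, List.not_mem_nil,
      or_false] at hc <;>
    first
    | exact hc.elim
    | (rcases hc with rfl | rfl <;> exact ⟨_, _, rfl⟩)
    | (subst hc; exact ⟨_, _, rfl⟩)

/-- Dead positions are atom occurrences of the redex. -/
theorem rule_R3dead {r : RuleName} {γ δ : Formula} (h : RuleInstance r γ δ)
    {d : List Bool} (hd : d ∈ ruleDead r) : ∃ n b, γ.sub d = some (.atom n b) := by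
  cases h <;>
    simp only [ruleDead, List.mem_singleton, List.mem_cons, List.not_mem_nil,
      or_false] at hd <;>
    first
    | exact hd.elim
    | (rcases hd with rfl | rfl <;> exact ⟨_, _, rfl⟩)
    | (subst hd; exact ⟨_, _, rfl⟩)
theorem pf_symm : Symmetric (fun (a b : List Bool × List Bool) =>
    ¬ (a.1 <+: b.1) ∧ ¬ (b.1 <+: a.1) ∧ ¬ (a.2 <+: b.2) ∧ ¬ (b.2 <+: a.2)) :=
  fun _ _ ⟨h1, h2, h3, h4⟩ => ⟨h2, h1, h4, h3⟩

/-- Trace a conclusion position back to the corresponding premiss position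
(`none` = the position is newly created). -/
def traceBack (r : RuleName) (q p : List Bool) : Option (List Bool) :=
  if q <+: p then
    match (ruleCorr r).find? (fun c => decide (c.1 <+: p.drop q.length)) with
    | some c => some (q ++ c.2 ++ (p.drop q.length).drop c.1.length)
    | none => none
  else some p

/-- Trace a premiss position forward (`none` = the position dies here). -/
def traceFwd (r : RuleName) (q p : List Bool) : Option (List Bool) :=
  if q <+: p then
    match (ruleCorr r).find? (fun c => decide (c.2 <+: p.drop q.length)) with
    | some c => some (q ++ c.1 ++ (p.drop q.length).drop c.2.length)
    | none => none
  else some p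

theorem tb_not_prefix {r q p} (h : ¬ q <+: p) : traceBack r q p = some p := by
  simp [traceBack, h]

theorem tf_not_prefix {r q p} (h : ¬ q <+: p) : traceFwd r q p = some p := by
  simp [traceFwd, h]

theorem find?_corr_eq {r : RuleName} {c c' : List Bool × List Bool} {s : List Bool}
    (hc : c ∈ ruleCorr r) (hpre : c.1 <+: s)
    (h : (ruleCorr r).find? (fun c => decide (c.1 <+: s)) = some c') : c' = c := by
  have hmem := List.mem_of_find?_eq_some h
  have hpred : c'.1 <+: s := by simpa using List.find?_some h
  by_contra hne
  have hsymm : Std.Symm (fun (a b : List Bool × List Bool) =>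
    ¬ (a.1 <+: b.1) ∧ ¬ (b.1 <+: a.1) ∧ ¬ (a.2 <+: b.2) ∧ ¬ (b.2 <+: a.2)) :=
    ⟨fun _ _ h => pf_symm h⟩
  have := (pf_ruleCorr r).forall hmem hc hne
  rcases List.prefix_or_prefix_of_prefix hpre hpred with h' | h'
  · exact this.2.1 h'
  · exact this.1 h'

theorem find?_corr_eq2 {r : RuleName} {c c' : List Bool × List Bool} {s : List Bool}
    (hc : c ∈ ruleCorr r) (hpre : c.2 <+: s)
    (h : (ruleCorr r).find? (fun c => decide (c.2 <+: s)) = some c') : c' = c := by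
  have hmem := List.mem_of_find?_eq_some h
  have hpred : c'.2 <+: s := by simpa using List.find?_some h
  by_contra hne
  have hsymm : Std.Symm (fun (a b : List Bool × List Bool) =>
    ¬ (a.1 <+: b.1) ∧ ¬ (b.1 <+: a.1) ∧ ¬ (a.2 <+: b.2) ∧ ¬ (b.2 <+: a.2)) :=
    ⟨fun _ _ h => pf_symm h⟩
  have := (pf_ruleCorr r).forall hmem hc hne
  rcases List.prefix_or_prefix_of_prefix hpre hpred with h' | h'
  · exact this.2.2.2 h'
  · exact this.2.2.1 h'

theorem tb_corr {r : RuleName} {c} (hc : c ∈ ruleCorr r) (q t : List Bool) :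
    traceBack r q (q ++ c.1 ++ t) = some (q ++ c.2 ++ t) := by
  have hpre : q <+: q ++ c.1 ++ t := by
    rw [List.append_assoc]; exact List.prefix_append _ _
  have hdrop : (q ++ c.1 ++ t).drop q.length = c.1 ++ t := by
    rw [List.append_assoc]; exact List.drop_left
  have hex : ∃ c' ∈ ruleCorr r, (fun c' => decide (c'.1 <+: (q ++ c.1 ++ t).drop q.length)) c' = true :=
    ⟨c, hc, by simp [hdrop]⟩
  obtain ⟨c', hc'⟩ := Option.isSome_iff_exists.1 (List.find?_isSome.2 hex)
  have := find?_corr_eq hc (by rw [hdrop]; exact List.prefix_append _ _) hc'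
  subst this
  rw [hdrop] at hc'
  simp [traceBack, hpre, hc', hdrop, List.drop_left]

theorem tf_corr {r : RuleName} {c} (hc : c ∈ ruleCorr r) (q t : List Bool) :
    traceFwd r q (q ++ c.2 ++ t) = some (q ++ c.1 ++ t) := by
  have hpre : q <+: q ++ c.2 ++ t := by
    rw [List.append_assoc]; exact List.prefix_append _ _
  have hdrop : (q ++ c.2 ++ t).drop q.length = c.2 ++ t := by
    rw [List.append_assoc]; exact List.drop_left
  have hex : ∃ c' ∈ ruleCorr r, (fun c' => decide (c'.2 <+: (q ++ c.2 ++ t).drop q.length)) c' = true :=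
    ⟨c, hc, by simp [hdrop]⟩
  obtain ⟨c', hc'⟩ := Option.isSome_iff_exists.1 (List.find?_isSome.2 hex)
  have := find?_corr_eq2 hc (by rw [hdrop]; exact List.prefix_append _ _) hc'
  subst this
  rw [hdrop] at hc'
  simp [traceFwd, hpre, hc', hdrop, List.drop_left]

theorem tb_structural {r : RuleName} (hr : r.isStructural = true) {q p : List Bool}
    (hpre : q <+: p) : traceBack r q p = none := by
  simp [traceBack, hpre, ruleCorr_structural hr]

theorem tb_some_elim {r : RuleName} {q p p' : List Bool} (hpre : q <+: p)
    (h : traceBack r q p = some p') :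
    ∃ c ∈ ruleCorr r, ∃ t, p = q ++ c.1 ++ t ∧ p' = q ++ c.2 ++ t := by
  rw [traceBack, if_pos hpre] at h
  rcases hfind : (ruleCorr r).find? (fun c => decide (c.1 <+: p.drop q.length)) with _ | c
  · rw [hfind] at h; exact absurd h (by simp)
  · rw [hfind] at h
    refine ⟨c, List.mem_of_find?_eq_some hfind, (p.drop q.length).drop c.1.length, ?_, ?_⟩
    · have hbig : c.1 <+: p.drop q.length := by simpa using List.find?_some hfind
      conv_lhs => rw [← List.prefix_iff_eq_append.1 hpre]
      rw [List.append_assoc]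
      congr 1
      exact (List.prefix_iff_eq_append.1 hbig).symm
    · simpa using h.symm

theorem tb_none_elim {r : RuleName} {q p : List Bool}
    (h : traceBack r q p = none) :
    q <+: p ∧ ∀ c ∈ ruleCorr r, ¬ c.1 <+: p.drop q.length := by
  by_cases hpre : q <+: p
  · refine ⟨hpre, fun c hc hcp => ?_⟩
    have := tb_corr hc q ((p.drop q.length).drop c.1.length)
    rw [show q ++ c.1 ++ (p.drop q.length).drop c.1.length = p from ?_] at this
    · rw [this] at h; cases h
    · conv_rhs => rw [← List.prefix_iff_eq_append.1 hpre]
      rw [List.append_assoc]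
      congr 1
      exact List.prefix_iff_eq_append.1 hcp
  · rw [tb_not_prefix hpre] at h; cases h

theorem tf_none_elim {r : RuleName} {q p : List Bool}
    (h : traceFwd r q p = none) :
    q <+: p ∧ ∀ c ∈ ruleCorr r, ¬ c.2 <+: p.drop q.length := by
  by_cases hpre : q <+: p
  · refine ⟨hpre, fun c hc hcp => ?_⟩
    have := tf_corr hc q ((p.drop q.length).drop c.2.length)
    rw [show q ++ c.2 ++ (p.drop q.length).drop c.2.length = p from ?_] at this
    · rw [this] at h; cases h
    · conv_rhs => rw [← List.prefix_iff_eq_append.1 hpre]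
      rw [List.append_assoc]
      congr 1
      exact List.prefix_iff_eq_append.1 hcp
  · rw [tf_not_prefix hpre] at h; cases h
theorem tf_structural {r : RuleName} (hr : r.isStructural = true) {q p : List Bool}
    (hpre : q <+: p) : traceFwd r q p = none := by
  simp [traceFwd, hpre, ruleCorr_structural hr]

/-- Classification of conclusion occurrences of a step. -/
theorem step_concl_classify {r : RuleName} {q : List Bool} {φ ψ : Formula}
    (hst : StepAt r q φ ψ) {p : List Bool} {n : ℕ} {b : Bool}
    (hp : ψ.sub p = some (.atom n b)) :
    (¬ q <+: p ∧ φ.sub p = some (.atom n b) ∧ traceBack r q p = some p) ∨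
    (∃ c ∈ ruleCorr r, ∃ t, p = q ++ c.1 ++ t ∧
      φ.sub (q ++ c.2 ++ t) = some (.atom n b) ∧
      traceBack r q p = some (q ++ c.2 ++ t)) ∨
    (∃ nn ∈ ruleNew r, p = q ++ nn ∧ r.isStructural = true ∧
      traceBack r q p = none) := by
  obtain ⟨γ, δ, hγ, hri, rfl⟩ := hst
  by_cases hpre : q <+: p
  · have hdec : q ++ p.drop q.length = p := List.prefix_iff_eq_append.1 hpre
    have hsubp : δ.sub (p.drop q.length) = some (.atom n b) := by
      rw [← hdec] at hp; rwa [Formula.sub_repl_prefix δ hγ] at hp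
    rcases rule_R1 hri hsubp with ⟨c, hc, t, hct, hγsub⟩ | hnew
    · right; left
      refine ⟨c, hc, t, ?_, ?_, ?_⟩
      · rw [← hdec, hct, List.append_assoc]
      · rw [List.append_assoc, Formula.sub_append, hγ]; exact hγsub
      · rw [← hdec, hct, ← List.append_assoc]; exact tb_corr hc q t
    · right; right
      have hstr := ruleNew_structural (List.ne_nil_of_mem hnew)
      exact ⟨_, hnew, hdec.symm, hstr, tb_structural hstr hpre⟩
  · left
    exact ⟨hpre, (Formula.sub_repl_not_prefix δ hγ hpre n b).1 hp, tb_not_prefix hpre⟩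

/-- Classification of premiss occurrences of a step. -/
theorem step_prem_classify {r : RuleName} {q : List Bool} {φ ψ : Formula}
    (hst : StepAt r q φ ψ) {p : List Bool} {n : ℕ} {b : Bool}
    (hp : φ.sub p = some (.atom n b)) :
    (¬ q <+: p ∧ ψ.sub p = some (.atom n b) ∧ traceFwd r q p = some p) ∨
    (∃ c ∈ ruleCorr r, ∃ t, p = q ++ c.2 ++ t ∧
      ψ.sub (q ++ c.1 ++ t) = some (.atom n b) ∧
      traceFwd r q p = some (q ++ c.1 ++ t)) ∨
    (∃ d ∈ ruleDead r, p = q ++ d ∧ r.isStructural = true ∧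
      traceFwd r q p = none) := by
  obtain ⟨γ, δ, hγ, hri, rfl⟩ := hst
  by_cases hpre : q <+: p
  · have hdec : q ++ p.drop q.length = p := List.prefix_iff_eq_append.1 hpre
    have hsubp : γ.sub (p.drop q.length) = some (.atom n b) := by
      rw [← hdec, Formula.sub_append, hγ] at hp; exact hp
    rcases rule_R2 hri hsubp with ⟨c, hc, t, hct, hδsub⟩ | hdead
    · right; left
      refine ⟨c, hc, t, ?_, ?_, ?_⟩
      · rw [← hdec, hct, List.append_assoc]
      · rw [List.append_assoc, Formula.sub_repl_prefix δ hγ]; exact hδsub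
      · rw [← hdec, hct, ← List.append_assoc]; exact tf_corr hc q t
    · right; right
      have hstr := ruleDead_structural (List.ne_nil_of_mem hdead)
      exact ⟨_, hdead, hdec.symm, hstr, tf_structural hstr hpre⟩
  · left
    exact ⟨hpre, (Formula.sub_repl_not_prefix δ hγ hpre n b).2 hp, tf_not_prefix hpre⟩
theorem find?_range_eq_some {p : ℕ → Bool} {n v : ℕ} (h1 : v < n) (h2 : p v = true)
    (h3 : ∀ j, j < v → p j = false) : (List.range n).find? p = some v := by
  induction n with
  | zero => omega
  | succ n ih =>
    rw [List.range_succ, List.find?_append]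
    rcases Nat.lt_or_ge v n with h | h
    · rw [ih h]; rfl
    · have hv : n = v := by omega
      subst hv
      have hnone : (List.range n).find? p = none := by
        rw [List.find?_eq_none]; intro x hx; simp [h3 x (List.mem_range.1 hx)]
      simp [hnone, h2]

theorem find?_range_eq_none {p : ℕ → Bool} {n : ℕ} (h : ∀ j, j < n → p j = false) :
    (List.range n).find? p = none := by
  rw [List.find?_eq_none]; intro x hx; simp [h x (List.mem_range.1 hx)]

/-- The canonical edge map of a derivation. -/
def Ef (Φ : Deriv) : ℕ → List Bool → ℕ
  | 0, p => Nat.pair 0 (Encodable.encode p)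
  | (i+1), p =>
    match traceBack (Φ.stepAt i).1 (Φ.stepAt i).2.1 p with
    | some p' => Ef Φ i p'
    | none => Nat.pair (i+1) (Encodable.encode p)

/-- Whether edge `e` is killed by step `j`. -/
def dies (Φ : Deriv) (j e : ℕ) : Bool :=
  (ruleDead (Φ.stepAt j).1).any fun d => Ef Φ j ((Φ.stepAt j).2.1 ++ d) == e

/-- The canonical atomic flow of a derivation. -/
def flowOf (Φ : Deriv) : PreFlow where
  V := (Finset.range Φ.steps.length).filter fun i => (Φ.stepAt i).1.isStructural
  E := ((List.range Φ.nf).flatMap fun i => ((Φ.fml i).occList).map (Ef Φ i)).toFinset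
  η := fun v => labelOf (Φ.stepAt v).1
  up := fun e => if (Nat.unpair e).1 = 0 then none else some ((Nat.unpair e).1 - 1)
  lo := fun e => (List.range Φ.steps.length).find? fun j => dies Φ j e

theorem mem_E_iff {Φ : Deriv} {e : ℕ} :
    e ∈ (flowOf Φ).E ↔ ∃ i, i < Φ.nf ∧ ∃ p, (Φ.fml i).IsOcc p ∧ Ef Φ i p = e := by
  simp only [flowOf, List.mem_toFinset, List.mem_flatMap, List.mem_map, List.mem_range]
  constructor
  · rintro ⟨i, hi, p, hp, rfl⟩
    exact ⟨i, hi, p, Formula.mem_occList.1 hp, rfl⟩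
  · rintro ⟨i, hi, p, hp, rfl⟩
    exact ⟨i, hi, p, Formula.mem_occList.2 hp, rfl⟩

theorem mem_E_of_occ {Φ : Deriv} {i : ℕ} {p : List Bool} (hi : i < Φ.nf)
    (hp : (Φ.fml i).IsOcc p) : Ef Φ i p ∈ (flowOf Φ).E :=
  mem_E_iff.2 ⟨i, hi, p, hp, rfl⟩

theorem mem_V_iff {Φ : Deriv} {v : ℕ} :
    v ∈ (flowOf Φ).V ↔ v < Φ.steps.length ∧ (Φ.stepAt v).1.isStructural = true := by
  simp [flowOf]
theorem prefix_append3 (q a t : List Bool) : q <+: q ++ a ++ t := by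
  rw [List.append_assoc]; exact List.prefix_append _ _

theorem corr_inj2 {r : RuleName} {c c' : List Bool × List Bool}
    (hc : c ∈ ruleCorr r) (hc' : c' ∈ ruleCorr r) {t t' : List Bool}
    (h : c.2 ++ t = c'.2 ++ t') : c = c' ∧ t = t' := by
  have hcc : c = c' := by
    by_contra hne
    have hsymm : Std.Symm (fun (a b : List Bool × List Bool) =>
      ¬ (a.1 <+: b.1) ∧ ¬ (b.1 <+: a.1) ∧ ¬ (a.2 <+: b.2) ∧ ¬ (b.2 <+: a.2)) :=
      ⟨fun _ _ h => pf_symm h⟩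
    have hPF := (pf_ruleCorr r).forall hc hc' hne
    rcases List.prefix_or_prefix_of_prefix (⟨t, h⟩ : c.2 <+: c'.2 ++ t')
      (List.prefix_append _ _) with h' | h'
    · exact hPF.2.2.1 h'
    · exact hPF.2.2.2 h'
  subst hcc; exact ⟨rfl, List.append_cancel_left h⟩

theorem corr_inj1 {r : RuleName} {c c' : List Bool × List Bool}
    (hc : c ∈ ruleCorr r) (hc' : c' ∈ ruleCorr r) {t t' : List Bool}
    (h : c.1 ++ t = c'.1 ++ t') : c = c' ∧ t = t' := by
  have hcc : c = c' := by
    by_contra hne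
    have hsymm : Std.Symm (fun (a b : List Bool × List Bool) =>
      ¬ (a.1 <+: b.1) ∧ ¬ (b.1 <+: a.1) ∧ ¬ (a.2 <+: b.2) ∧ ¬ (b.2 <+: a.2)) :=
      ⟨fun _ _ h => pf_symm h⟩
    have hPF := (pf_ruleCorr r).forall hc hc' hne
    rcases List.prefix_or_prefix_of_prefix (⟨t, h⟩ : c.1 <+: c'.1 ++ t')
      (List.prefix_append _ _) with h' | h'
    · exact hPF.1 h'
    · exact hPF.2.1 h'
  subst hcc; exact ⟨rfl, List.append_cancel_left h⟩

/-- The master invariant of the canonical construction. -/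
theorem master (Φ : Deriv) (hwf : Φ.WF) :
    ∀ i, i < Φ.nf → ∀ p n b, (Φ.fml i).sub p = some (.atom n b) →
      ((∃ c p₀, Ef Φ i p = Nat.pair c (Encodable.encode p₀) ∧ c ≤ i ∧
        (Φ.fml c).sub p₀ = some (.atom n b) ∧
        (c = 0 ∨ ∃ k, c = k + 1 ∧ k < Φ.steps.length ∧
          (Φ.stepAt k).1.isStructural = true ∧
          ∃ nn ∈ ruleNew (Φ.stepAt k).1, p₀ = (Φ.stepAt k).2.1 ++ nn)) ∧
      (∀ p' n' b', (Φ.fml i).sub p' = some (.atom n' b') →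
        Ef Φ i p = Ef Φ i p' → p = p') ∧
      (∀ j, j < i → dies Φ j (Ef Φ i p) = false)) := by
  intro i
  induction i using Nat.strong_induction_on with
  | _ i IH =>
  cases i with
  | zero =>
    intro _ p n b hp
    refine ⟨⟨0, p, rfl, le_refl _, hp, Or.inl rfl⟩, ?_, ?_⟩
    · intro p' n' b' hp' heq
      have := (Nat.pair_eq_pair.1 heq).2
      exact Encodable.encode_injective this
    · intro j hj; omega
  | succ i =>
    intro hi p n b hp
    have hlen : i < Φ.steps.length := by
      have : i + 1 < Φ.steps.length + 1 := hi
      omega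
    have hinf : i < Φ.nf := by simp only [Deriv.nf]; omega
    have hst := hwf i hlen
    obtain ⟨γ, δ, hγ, hri, hψ⟩ := hst
    have hst : StepAt (Φ.stepAt i).1 (Φ.stepAt i).2.1 (Φ.fml i) (Φ.fml (i + 1)) :=
      ⟨γ, δ, hγ, hri, hψ⟩
    -- helper: no edge live at `i` dies a second time at `i` unless it is a dead position
    have hdies : ∀ pp n' b', (Φ.fml i).sub pp = some (.atom n' b') →
        (∀ d ∈ ruleDead (Φ.stepAt i).1, pp ≠ (Φ.stepAt i).2.1 ++ d) →
        dies Φ i (Ef Φ i pp) = false := by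
      intro pp n' b' hpp hne
      rw [dies, List.any_eq_false]
      intro d hd
      simp only [beq_iff_eq]
      intro heq
      obtain ⟨nd, bd, hsubd⟩ := rule_R3dead hri hd
      have hoccd : (Φ.fml i).sub ((Φ.stepAt i).2.1 ++ d) = some (.atom nd bd) := by
        rw [Formula.sub_append, hγ]; exact hsubd
      have := (IH i (by omega) hinf _ _ _ hoccd).2.1 pp n' b' hpp heq
      exact hne d hd this.symm
    rcases step_concl_classify hst hp with ⟨hnp, hφp, htb⟩ |
      ⟨c, hc, t, hpe, hφp, htb⟩ | ⟨nn, hnn, hpe, hstr, htb⟩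
    · -- context occurrence
      have hEf : Ef Φ (i + 1) p = Ef Φ i p := by simp only [Ef, htb]
      obtain ⟨⟨c, p₀, h1, h2, h3, h4⟩, hB, hC⟩ := IH i (by omega) hinf p n b hφp
      refine ⟨⟨c, p₀, hEf ▸ h1, by omega, h3, h4⟩, ?_, ?_⟩
      · intro p' n' b' hp' heq
        rcases step_concl_classify hst hp' with ⟨hnp', hφp', htb'⟩ |
          ⟨c', hc', t', hpe', hφp', htb'⟩ | ⟨nn', hnn', hpe', hstr', htb'⟩
        · have hEf' : Ef Φ (i + 1) p' = Ef Φ i p' := by simp only [Ef, htb']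
          exact hB p' n' b' hφp' (by rw [hEf, hEf'] at heq; exact heq)
        · have hEf' : Ef Φ (i + 1) p' = Ef Φ i ((Φ.stepAt i).2.1 ++ c'.2 ++ t') := by
            simp only [Ef, htb']
          have hpq := hB _ _ _ hφp' (by rw [hEf, hEf'] at heq; exact heq)
          exact absurd (hpq ▸ prefix_append3 _ _ _) hnp
        · have hEf' : Ef Φ (i + 1) p' = Nat.pair (i + 1) (Encodable.encode p') := by
            simp only [Ef, htb']
          rw [hEf, hEf', h1] at heq
          have := (Nat.pair_eq_pair.1 heq).1
          omega
      · intro j hj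
        rw [hEf]
        rcases Nat.lt_or_ge j i with h | h
        · exact hC j h
        · have : j = i := by omega
          subst this
          exact hdies p n b hφp
            (fun d hd hne => hnp (hne ▸ List.prefix_append _ _))
    · -- corresponding occurrence
      have hEf : Ef Φ (i + 1) p = Ef Φ i ((Φ.stepAt i).2.1 ++ c.2 ++ t) := by
        simp only [Ef, htb]
      obtain ⟨⟨cc, p₀, h1, h2, h3, h4⟩, hB, hC⟩ := IH i (by omega) hinf _ n b hφp
      refine ⟨⟨cc, p₀, hEf ▸ h1, by omega, h3, h4⟩, ?_, ?_⟩
      · intro p' n' b' hp' heq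
        rcases step_concl_classify hst hp' with ⟨hnp', hφp', htb'⟩ |
          ⟨c', hc', t', hpe', hφp', htb'⟩ | ⟨nn', hnn', hpe', hstr', htb'⟩
        · have hEf' : Ef Φ (i + 1) p' = Ef Φ i p' := by simp only [Ef, htb']
          have hpq := hB _ _ _ hφp' (by rw [hEf, hEf'] at heq; exact heq)
          exact absurd (hpq ▸ prefix_append3 _ _ _) hnp'
        · have hEf' : Ef Φ (i + 1) p' = Ef Φ i ((Φ.stepAt i).2.1 ++ c'.2 ++ t') := by
            simp only [Ef, htb']
          have hpq := hB _ _ _ hφp' (by rw [hEf, hEf'] at heq; exact heq)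
          rw [List.append_assoc, List.append_assoc] at hpq
          have h22 := List.append_cancel_left hpq
          obtain ⟨rfl, rfl⟩ := corr_inj2 hc hc' h22
          rw [hpe, hpe']
        · have hEf' : Ef Φ (i + 1) p' = Nat.pair (i + 1) (Encodable.encode p') := by
            simp only [Ef, htb']
          rw [hEf, hEf', h1] at heq
          have := (Nat.pair_eq_pair.1 heq).1
          omega
      · intro j hj
        rw [hEf]
        rcases Nat.lt_or_ge j i with h | h
        · exact hC j h
        · have : j = i := by omega
          subst this
          refine hdies _ n b hφp ?_
          intro d hd hne
          have h22 : c.2 ++ t = d := by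
            rw [List.append_assoc] at hne
            exact List.append_cancel_left hne
          have hstr := ruleDead_structural (List.ne_nil_of_mem hd)
          rw [ruleCorr_structural hstr] at hc
          exact absurd hc List.not_mem_nil
    · -- newly created occurrence
      have hEf : Ef Φ (i + 1) p = Nat.pair (i + 1) (Encodable.encode p) := by
        simp only [Ef, htb]
      refine ⟨⟨i + 1, p, hEf, le_refl _, hp,
        Or.inr ⟨i, rfl, hlen, hstr, nn, hnn, hpe⟩⟩, ?_, ?_⟩
      · intro p' n' b' hp' heq
        rcases step_concl_classify hst hp' with ⟨hnp', hφp', htb'⟩ |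
          ⟨c', hc', t', hpe', hφp', htb'⟩ | ⟨nn', hnn', hpe', hstr', htb'⟩
        · have hEf' : Ef Φ (i + 1) p' = Ef Φ i p' := by simp only [Ef, htb']
          obtain ⟨⟨cc, p₀, h1, h2, _, _⟩, _, _⟩ := IH i (by omega) hinf p' n' b' hφp'
          rw [hEf, hEf', h1] at heq
          have := (Nat.pair_eq_pair.1 heq).1
          omega
        · have hEf' : Ef Φ (i + 1) p' = Ef Φ i ((Φ.stepAt i).2.1 ++ c'.2 ++ t') := by
            simp only [Ef, htb']
          obtain ⟨⟨cc, p₀, h1, h2, _, _⟩, _, _⟩ := IH i (by omega) hinf _ n' b' hφp'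
          rw [hEf, hEf', h1] at heq
          have := (Nat.pair_eq_pair.1 heq).1
          omega
        · have hEf' : Ef Φ (i + 1) p' = Nat.pair (i + 1) (Encodable.encode p') := by
            simp only [Ef, htb']
          rw [hEf, hEf'] at heq
          exact Encodable.encode_injective (Nat.pair_eq_pair.1 heq).2
      · intro j hj
        rw [hEf, dies, List.any_eq_false]
        intro d hd
        simp only [beq_iff_eq]
        intro heq
        have hjlen : j < Φ.steps.length := by omega
        obtain ⟨γj, δj, hγj, hrij, hψj⟩ := hwf j hjlen
        obtain ⟨ndj, bdj, hsubdj⟩ := rule_R3dead hrij hd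
        have hoccd : (Φ.fml j).sub ((Φ.stepAt j).2.1 ++ d) = some (.atom ndj bdj) := by
          rw [Formula.sub_append, hγj]; exact hsubdj
        obtain ⟨⟨cc, p₀, h1, h2, _, _⟩, _, _⟩ :=
          IH j (by omega) (by simp only [Deriv.nf]; omega) _ _ _ hoccd
        rw [h1] at heq
        have := (Nat.pair_eq_pair.1 heq).1
        omega
theorem Ef_new {Φ : Deriv} {k : ℕ} (hstr : (Φ.stepAt k).1.isStructural = true)
    (nn : List Bool) :
    Ef Φ (k + 1) ((Φ.stepAt k).2.1 ++ nn) =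
      Nat.pair (k + 1) (Encodable.encode ((Φ.stepAt k).2.1 ++ nn)) := by
  simp only [Ef, tb_structural hstr (List.prefix_append _ _)]

theorem Ef_zero {Φ : Deriv} (p : List Bool) :
    Ef Φ 0 p = Nat.pair 0 (Encodable.encode p) := rfl

theorem Ef_corr {Φ : Deriv} {k : ℕ} {c} (hc : c ∈ ruleCorr (Φ.stepAt k).1)
    (t : List Bool) :
    Ef Φ (k + 1) ((Φ.stepAt k).2.1 ++ c.1 ++ t) =
      Ef Φ k ((Φ.stepAt k).2.1 ++ c.2 ++ t) := by
  simp only [Ef, tb_corr hc]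

theorem Ef_ctx {Φ : Deriv} {k : ℕ} {p : List Bool}
    (h : ¬ (Φ.stepAt k).2.1 <+: p) : Ef Φ (k + 1) p = Ef Φ k p := by
  simp only [Ef, tb_not_prefix h]

theorem up_pair_succ {Φ : Deriv} (k x : ℕ) :
    (flowOf Φ).up (Nat.pair (k + 1) x) = some k := by
  simp [flowOf, Nat.unpair_pair]

theorem up_pair_zero {Φ : Deriv} (x : ℕ) :
    (flowOf Φ).up (Nat.pair 0 x) = none := by
  simp [flowOf, Nat.unpair_pair]

theorem up_Ef_new {Φ : Deriv} {k : ℕ} (hstr : (Φ.stepAt k).1.isStructural = true)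
    (nn : List Bool) :
    (flowOf Φ).up (Ef Φ (k + 1) ((Φ.stepAt k).2.1 ++ nn)) = some k := by
  rw [Ef_new hstr, up_pair_succ]

theorem lo_Ef_dead {Φ : Deriv} (hwf : Φ.WF) {k : ℕ} (hk : k < Φ.steps.length)
    {d : List Bool} (hd : d ∈ ruleDead (Φ.stepAt k).1) :
    (flowOf Φ).lo (Ef Φ k ((Φ.stepAt k).2.1 ++ d)) = some k := by
  obtain ⟨γ, δ, hγ, hri, hψ⟩ := hwf k hk
  obtain ⟨nd, bd, hsubd⟩ := rule_R3dead hri hd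
  have hoccd : (Φ.fml k).sub ((Φ.stepAt k).2.1 ++ d) = some (.atom nd bd) := by
    rw [Formula.sub_append, hγ]; exact hsubd
  show (List.range Φ.steps.length).find? _ = some k
  apply find?_range_eq_some hk
  · rw [dies, List.any_eq_true]; exact ⟨d, hd, by simp⟩
  · intro j hj
    exact (master Φ hwf k (by simp only [Deriv.nf]; omega) _ _ _ hoccd).2.2 j hj

theorem lo_Ef_concl {Φ : Deriv} (hwf : Φ.WF) {p : List Bool} {n : ℕ} {b : Bool}
    (hp : (Φ.fml Φ.steps.length).sub p = some (.atom n b)) :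
    (flowOf Φ).lo (Ef Φ Φ.steps.length p) = none := by
  show (List.range Φ.steps.length).find? _ = none
  apply find?_range_eq_none
  intro j hj
  exact (master Φ hwf Φ.steps.length (by simp [Deriv.nf]) _ _ _ hp).2.2 j hj

/-- Polarity assignment via the atom sign at the creation point. -/
def piOf (Φ : Deriv) (e : ℕ) : Bool :=
  match (Φ.fml (Nat.unpair e).1).sub
      ((Encodable.decode (Nat.unpair e).2 : Option (List Bool)).getD []) with
  | some (.atom _ b) => b
  | _ => true

theorem piOf_Ef {Φ : Deriv} (hwf : Φ.WF) {i : ℕ} (hi : i < Φ.nf)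
    {p : List Bool} {n : ℕ} {b : Bool} (hp : (Φ.fml i).sub p = some (.atom n b)) :
    piOf Φ (Ef Φ i p) = b := by
  obtain ⟨⟨c, p₀, h1, h2, h3, h4⟩, _, _⟩ := master Φ hwf i hi p n b hp
  rw [h1, piOf]
  simp only [Nat.unpair_pair, Encodable.encodek, Option.getD_some]
  rw [h3]
theorem stepCond_holds (Φ : Deriv) (hwf : Φ.WF) {i : ℕ} (hi : i < Φ.steps.length) :
    stepCond (flowOf Φ) (Ef Φ) i i (Φ.stepAt i).1 (Φ.stepAt i).2.1
      (Φ.fml i) (Φ.fml (i + 1)) := by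
  have hinf : i < Φ.nf := by simp only [Deriv.nf]; omega
  obtain ⟨γ, δ, hγ, hri, hψ⟩ := hwf i hi
  refine ⟨fun p hpre _ => Ef_ctx hpre, ?_⟩
  have hB := fun {p n b} (hp : (Φ.fml i).sub p = some (.atom n b)) =>
    (master Φ hwf i hinf p n b hp).2.1
  generalize hr : (Φ.stepAt i).1 = r at hri ⊢
  have hcorr : ∀ c ∈ ruleCorr r, ∀ p : List Bool,
      (Φ.fml (i + 1)).IsOcc ((Φ.stepAt i).2.1 ++ c.1 ++ p) →
      Ef Φ (i + 1) ((Φ.stepAt i).2.1 ++ c.1 ++ p) =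
        Ef Φ i ((Φ.stepAt i).2.1 ++ c.2 ++ p) := by
    intro c hc p _
    exact Ef_corr (by rw [hr]; exact hc) p
  cases hri with
  | aiDown n₀ b₀ =>
    have hstr : (Φ.stepAt i).1.isStructural = true := by rw [hr]; rfl
    refine ⟨by simp [flowOf, hr, labelOf], up_Ef_new hstr _, up_Ef_new hstr _, ?_⟩
    rw [Ef_new hstr, Ef_new hstr]
    intro h
    have := Encodable.encode_injective (Nat.pair_eq_pair.1 h).2
    simp at this
  | aiUp n₀ b₀ =>
    have hoccF : (Φ.fml i).sub ((Φ.stepAt i).2.1 ++ [false]) = some (.atom n₀ b₀) := by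
      rw [Formula.sub_append, hγ]; rfl
    have hoccT : (Φ.fml i).sub ((Φ.stepAt i).2.1 ++ [true]) = some (.atom n₀ (!b₀)) := by
      rw [Formula.sub_append, hγ]; rfl
    refine ⟨by simp [flowOf, hr, labelOf],
      lo_Ef_dead hwf hi (by rw [hr]; simp [ruleDead]),
      lo_Ef_dead hwf hi (by rw [hr]; simp [ruleDead]), ?_⟩
    intro h
    have := hB hoccF _ _ _ hoccT h
    simp at this
  | awDown n₀ b₀ =>
    have hstr : (Φ.stepAt i).1.isStructural = true := by rw [hr]; rfl
    refine ⟨by simp [flowOf, hr, labelOf], ?_⟩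
    have := up_Ef_new hstr []
    simpa using this
  | awUp n₀ b₀ =>
    refine ⟨by simp [flowOf, hr, labelOf], ?_⟩
    have := lo_Ef_dead hwf hi (d := []) (by rw [hr]; simp [ruleDead])
    simpa using this
  | acDown n₀ b₀ =>
    have hstr : (Φ.stepAt i).1.isStructural = true := by rw [hr]; rfl
    have hoccF : (Φ.fml i).sub ((Φ.stepAt i).2.1 ++ [false]) = some (.atom n₀ b₀) := by
      rw [Formula.sub_append, hγ]; rfl
    have hoccT : (Φ.fml i).sub ((Φ.stepAt i).2.1 ++ [true]) = some (.atom n₀ b₀) := by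
      rw [Formula.sub_append, hγ]; rfl
    refine ⟨by simp [flowOf, hr, labelOf],
      lo_Ef_dead hwf hi (by rw [hr]; simp [ruleDead]),
      lo_Ef_dead hwf hi (by rw [hr]; simp [ruleDead]), ?_, ?_⟩
    · have := up_Ef_new hstr []
      simpa using this
    · intro h
      have := hB hoccF _ _ _ hoccT h
      simp at this
  | acUp n₀ b₀ =>
    have hstr : (Φ.stepAt i).1.isStructural = true := by rw [hr]; rfl
    refine ⟨by simp [flowOf, hr, labelOf], ?_, up_Ef_new hstr _, up_Ef_new hstr _, ?_⟩
    · have := lo_Ef_dead hwf hi (d := []) (by rw [hr]; simp [ruleDead])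
      simpa using this
    · rw [Ef_new hstr, Ef_new hstr]
      intro h
      have := Encodable.encode_injective (Nat.pair_eq_pair.1 h).2
      simp at this
  | s α β γ' => exact hcorr
  | m α β γ' δ' => exact hcorr
  | eqOrComm α β => exact hcorr
  | eqAndComm α β => exact hcorr
  | eqOrAssocL α β γ' => exact hcorr
  | eqOrAssocR α β γ' => exact hcorr
  | eqAndAssocL α β γ' => exact hcorr
  | eqAndAssocR α β γ' => exact hcorr
  | eqOrUnitDel α => exact hcorr
  | eqOrUnitAdd α => exact hcorr
  | eqAndUnitDel α => exact hcorr
  | eqAndUnitAdd α => exact hcorr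
  | eqTTDel => trivial
  | eqTTAdd => trivial
  | eqFFDel => trivial
  | eqFFAdd => trivial
theorem Ledges_eq (Φ : Deriv) (hwf : Φ.WF) {v : ℕ} (hv : v < Φ.steps.length)
    (hstr : (Φ.stepAt v).1.isStructural = true) :
    (flowOf Φ).Ledges v = ((ruleNew (Φ.stepAt v).1).map
      (fun nn => Ef Φ (v + 1) ((Φ.stepAt v).2.1 ++ nn))).toFinset := by
  obtain ⟨γ, δ, hγ, hri, hψ⟩ := hwf v hv
  ext e
  simp only [PreFlow.Ledges, Finset.mem_filter, List.mem_toFinset, List.mem_map]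
  constructor
  · rintro ⟨hE, hup⟩
    obtain ⟨i, hi, p, hp, rfl⟩ := mem_E_iff.1 hE
    obtain ⟨n, b, hsub⟩ := hp
    obtain ⟨⟨c, p₀, h1, h2, h3, h4⟩, -, -⟩ := master Φ hwf i hi p n b hsub
    rw [h1] at hup ⊢
    have hup' : (if c = 0 then (none : Option ℕ) else some (c - 1)) = some v := by
      simpa [flowOf, Nat.unpair_pair] using hup
    have hc0 : c ≠ 0 := by intro h; rw [h] at hup'; simp at hup'
    have hcv : c = v + 1 := by
      rw [if_neg hc0] at hup'
      have := Option.some_injective _ hup'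
      omega
    rcases h4 with h4 | ⟨k, hk1, hk2, hk3, nn, hnn, hp₀⟩
    · exact absurd h4 hc0
    have hkv : k = v := by omega
    subst hkv
    refine ⟨nn, hnn, ?_⟩
    rw [Ef_new hstr, hp₀, hcv]
  · rintro ⟨nn, hnn, rfl⟩
    obtain ⟨n, b, hsubnn⟩ := rule_R3new hri hnn
    have hocc : (Φ.fml (v + 1)).IsOcc ((Φ.stepAt v).2.1 ++ nn) :=
      ⟨n, b, by rw [hψ, Formula.sub_repl_prefix δ hγ]; exact hsubnn⟩
    refine ⟨mem_E_of_occ (by simp only [Deriv.nf]; omega) hocc, ?_⟩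
    rw [Ef_new hstr, up_pair_succ]

theorem Uedges_eq (Φ : Deriv) (hwf : Φ.WF) {v : ℕ} (hv : v < Φ.steps.length) :
    (flowOf Φ).Uedges v = ((ruleDead (Φ.stepAt v).1).map
      (fun d => Ef Φ v ((Φ.stepAt v).2.1 ++ d))).toFinset := by
  obtain ⟨γ, δ, hγ, hri, hψ⟩ := hwf v hv
  ext e
  simp only [PreFlow.Uedges, Finset.mem_filter, List.mem_toFinset, List.mem_map]
  constructor
  · rintro ⟨hE, hlo⟩
    have hlo' : (List.range Φ.steps.length).find? (fun j => dies Φ j e) = some v := hlo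
    have hdies : dies Φ v e = true := by simpa using List.find?_some hlo'
    rw [dies, List.any_eq_true] at hdies
    obtain ⟨d, hd, he⟩ := hdies
    exact ⟨d, hd, by simpa using he⟩
  · rintro ⟨d, hd, rfl⟩
    obtain ⟨n, b, hsubd⟩ := rule_R3dead hri hd
    have hocc : (Φ.fml v).IsOcc ((Φ.stepAt v).2.1 ++ d) :=
      ⟨n, b, by rw [Formula.sub_append, hγ]; exact hsubd⟩
    exact ⟨mem_E_of_occ (by simp only [Deriv.nf]; omega) hocc, lo_Ef_dead hwf hv hd⟩

theorem endpointsOK_flowOf (Φ : Deriv) (hwf : Φ.WF) : (flowOf Φ).endpointsOK := by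
  intro e hE
  constructor
  · intro w hup
    obtain ⟨i, hi, p, hp, rfl⟩ := mem_E_iff.1 hE
    obtain ⟨n, b, hsub⟩ := hp
    obtain ⟨⟨c, p₀, h1, h2, h3, h4⟩, -, -⟩ := master Φ hwf i hi p n b hsub
    rw [h1] at hup
    have hup' : (if c = 0 then (none : Option ℕ) else some (c - 1)) = some w := by
      simpa [flowOf, Nat.unpair_pair] using hup
    have hc0 : c ≠ 0 := by intro h; rw [h] at hup'; simp at hup'
    rcases h4 with h4 | ⟨k, hk1, hk2, hk3, nn, hnn, hp₀⟩
    · exact absurd h4 hc0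
    rw [if_neg hc0] at hup'
    have hw : k = w := by
      have := Option.some_injective _ hup'
      omega
    subst hw
    exact mem_V_iff.2 ⟨hk2, hk3⟩
  · intro w hlo
    have hlo' : (List.range Φ.steps.length).find? (fun j => dies Φ j e) = some w := hlo
    have hw : w ∈ List.range Φ.steps.length := List.mem_of_find?_eq_some hlo'
    have hdies : dies Φ w e = true := by simpa using List.find?_some hlo'
    rw [dies, List.any_eq_true] at hdies
    obtain ⟨d, hd, -⟩ := hdies
    exact mem_V_iff.2 ⟨List.mem_range.1 hw, ruleDead_structural (List.ne_nil_of_mem hd)⟩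

open Fin.NatCast in
theorem acyclic_flowOf (Φ : Deriv) (hwf : Φ.WF) : (flowOf Φ).Acyclic := by
  rintro ⟨h, ε, hE, hcyc⟩
  have hdec : ∀ i : Fin (h + 1),
      (Nat.unpair (ε (i + 1))).1 < (Nat.unpair (ε i)).1 := by
    intro i
    obtain ⟨hsome, heq⟩ := hcyc i
    have hfst : (Nat.unpair (ε i)).1 ≠ 0 := by
      intro h0
      rw [show (flowOf Φ).up (ε i) = if (Nat.unpair (ε i)).1 = 0 then none
        else some ((Nat.unpair (ε i)).1 - 1) from rfl, if_pos h0] at hsome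
      simp at hsome
    have hup : (flowOf Φ).up (ε i) = some ((Nat.unpair (ε i)).1 - 1) := by
      rw [show (flowOf Φ).up (ε i) = if (Nat.unpair (ε i)).1 = 0 then none
        else some ((Nat.unpair (ε i)).1 - 1) from rfl, if_neg hfst]
    rw [hup] at heq
    have hlo : (flowOf Φ).lo (ε (i + 1)) = some ((Nat.unpair (ε i)).1 - 1) := heq.symm
    set j := (Nat.unpair (ε i)).1 - 1 with hj
    have hlo' : (List.range Φ.steps.length).find? (fun k => dies Φ k (ε (i + 1))) = some j := hlo
    have hjlen : j ∈ List.range Φ.steps.length := List.mem_of_find?_eq_some hlo'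
    have hdies : dies Φ j (ε (i + 1)) = true := by simpa using List.find?_some hlo'
    rw [dies, List.any_eq_true] at hdies
    obtain ⟨d, hd, he⟩ := hdies
    have he : Ef Φ j ((Φ.stepAt j).2.1 ++ d) = ε (i + 1) := by simpa using he
    have hjlen' : j < Φ.steps.length := List.mem_range.1 hjlen
    obtain ⟨γ, δ, hγ, hri, hψ⟩ := hwf j hjlen'
    obtain ⟨n, b, hsubd⟩ := rule_R3dead hri hd
    have hoccd : (Φ.fml j).sub ((Φ.stepAt j).2.1 ++ d) = some (.atom n b) := by
      rw [Formula.sub_append, hγ]; exact hsubd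
    obtain ⟨⟨c, p₀, h1, h2, -, -⟩, -, -⟩ :=
      master Φ hwf j (by simp only [Deriv.nf]; omega) _ n b hoccd
    rw [← he, h1, Nat.unpair_pair]
    omega
  -- strictly decreasing around a cycle: contradiction
  have hM : ∀ k : ℕ, (Nat.unpair (ε ((k : Fin (h + 1))))).1 + k ≤
      (Nat.unpair (ε 0)).1 := by
    intro k
    induction k with
    | zero => simp
    | succ k ih =>
      have : ((k + 1 : ℕ) : Fin (h + 1)) = (k : Fin (h + 1)) + 1 := by push_cast; ring
      rw [this]
      have := hdec (k : Fin (h + 1))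
      omega
  have := hM ((Nat.unpair (ε 0)).1 + 1)
  omega
theorem ruleNew_nodup (r : RuleName) : (ruleNew r).Nodup := by
  cases r <;> simp [ruleNew]

theorem ruleDead_nodup (r : RuleName) : (ruleDead r).Nodup := by
  cases r <;> simp [ruleDead]

theorem degOK_flowOf (Φ : Deriv) (hwf : Φ.WF) : (flowOf Φ).degOK := by
  intro v hv
  obtain ⟨hvlen, hstr⟩ := mem_V_iff.1 hv
  obtain ⟨γ, δ, hγ, hri, hψ⟩ := hwf v hvlen
  have hLcard : ((flowOf Φ).Ledges v).card = (ruleNew (Φ.stepAt v).1).length := by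
    rw [Ledges_eq Φ hwf hvlen hstr,
      List.map_congr_left (fun nn _ => Ef_new hstr nn),
      List.toFinset_card_of_nodup, List.length_map]
    refine List.Nodup.map ?_ (ruleNew_nodup _)
    intro a b hab
    have := Encodable.encode_injective (Nat.pair_eq_pair.1 hab).2
    exact List.append_cancel_left this
  have hUcard : ((flowOf Φ).Uedges v).card = (ruleDead (Φ.stepAt v).1).length := by
    rw [Uedges_eq Φ hwf hvlen, List.toFinset_card_of_nodup, List.length_map]
    refine List.Nodup.map_on ?_ (ruleDead_nodup _)
    intro d hd d' hd' heq
    obtain ⟨n, b, hsubd⟩ := rule_R3dead hri hd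
    obtain ⟨n', b', hsubd'⟩ := rule_R3dead hri hd'
    have hocc : (Φ.fml v).sub ((Φ.stepAt v).2.1 ++ d) = some (.atom n b) := by
      rw [Formula.sub_append, hγ]; exact hsubd
    have hocc' : (Φ.fml v).sub ((Φ.stepAt v).2.1 ++ d') = some (.atom n' b') := by
      rw [Formula.sub_append, hγ]; exact hsubd'
    have := (master Φ hwf v (by simp only [Deriv.nf]; omega) _ n b hocc).2.1
      _ n' b' hocc' heq
    exact List.append_cancel_left this
  rw [hLcard, hUcard]
  have hη : (flowOf Φ).η v = labelOf (Φ.stepAt v).1 := rfl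
  rw [hη]
  generalize (Φ.stepAt v).1 = r at hstr ⊢
  cases r <;> simp_all [RuleName.isStructural, ruleNew, ruleDead, labelOf, labDeg]

theorem polarity_flowOf (Φ : Deriv) (hwf : Φ.WF) :
    (flowOf Φ).PolarityOK (piOf Φ) := by
  intro v hv
  obtain ⟨hvlen, hstr⟩ := mem_V_iff.1 hv
  obtain ⟨γ, δ, hγ, hri, hψ⟩ := hwf v hvlen
  have hnf1 : v + 1 < Φ.nf := by simp only [Deriv.nf]; omega
  have hnfv : v < Φ.nf := by simp only [Deriv.nf]; omega
  have memL : ∀ nn ∈ ruleNew (Φ.stepAt v).1,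
      Ef Φ (v + 1) ((Φ.stepAt v).2.1 ++ nn) ∈ (flowOf Φ).edges v := by
    intro nn hnn
    apply Finset.mem_union_left
    rw [Ledges_eq Φ hwf hvlen hstr]
    simp only [List.mem_toFinset, List.mem_map]
    exact ⟨nn, hnn, rfl⟩
  have memU : ∀ d ∈ ruleDead (Φ.stepAt v).1,
      Ef Φ v ((Φ.stepAt v).2.1 ++ d) ∈ (flowOf Φ).edges v := by
    intro d hd
    apply Finset.mem_union_right
    rw [Uedges_eq Φ hwf hvlen]
    simp only [List.mem_toFinset, List.mem_map]
    exact ⟨d, hd, rfl⟩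
  have hLed := Ledges_eq Φ hwf hvlen hstr
  have hUed := Uedges_eq Φ hwf hvlen
  have hη : (flowOf Φ).η v = labelOf (Φ.stepAt v).1 := rfl
  generalize hr : (Φ.stepAt v).1 = r at hri hstr memL memU hLed hUed hη
  have hedges : ∀ e ∈ (flowOf Φ).edges v,
      (∃ nn ∈ ruleNew r, e = Ef Φ (v + 1) ((Φ.stepAt v).2.1 ++ nn)) ∨
      (∃ d ∈ ruleDead r, e = Ef Φ v ((Φ.stepAt v).2.1 ++ d)) := by
    intro e he
    rcases Finset.mem_union.1 he with hL | hU
    · rw [hLed] at hL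
      simp only [List.mem_toFinset, List.mem_map] at hL
      obtain ⟨nn, hnn, rfl⟩ := hL
      exact Or.inl ⟨nn, hnn, rfl⟩
    · rw [hUed] at hU
      simp only [List.mem_toFinset, List.mem_map] at hU
      obtain ⟨d, hd, rfl⟩ := hU
      exact Or.inr ⟨d, hd, rfl⟩
  cases hri with
  | aiDown n₀ b₀ =>
    constructor
    · intro hcon; rw [hη] at hcon; rcases hcon with h | h <;> simp [labelOf] at h
    · intro _
      have o1 : (Φ.fml (v + 1)).sub ((Φ.stepAt v).2.1 ++ [false]) =
          some (.atom n₀ b₀) := by rw [hψ, Formula.sub_repl_prefix _ hγ]; rfl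
      have o2 : (Φ.fml (v + 1)).sub ((Φ.stepAt v).2.1 ++ [true]) =
          some (.atom n₀ (!b₀)) := by rw [hψ, Formula.sub_repl_prefix _ hγ]; rfl
      refine ⟨_, memL [false] (by simp [ruleNew]), _, memL [true] (by simp [ruleNew]), ?_⟩
      rw [piOf_Ef hwf hnf1 o1, piOf_Ef hwf hnf1 o2]
      simp
  | aiUp n₀ b₀ =>
    constructor
    · intro hcon; rw [hη] at hcon; rcases hcon with h | h <;> simp [labelOf] at h
    · intro _
      have o1 : (Φ.fml v).sub ((Φ.stepAt v).2.1 ++ [false]) =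
          some (.atom n₀ b₀) := by rw [Formula.sub_append, hγ]; rfl
      have o2 : (Φ.fml v).sub ((Φ.stepAt v).2.1 ++ [true]) =
          some (.atom n₀ (!b₀)) := by rw [Formula.sub_append, hγ]; rfl
      refine ⟨_, memU [false] (by simp [ruleDead]), _, memU [true] (by simp [ruleDead]), ?_⟩
      rw [piOf_Ef hwf hnfv o1, piOf_Ef hwf hnfv o2]
      simp
  | awDown n₀ b₀ =>
    refine ⟨fun hcon => ?_, fun hcon => ?_⟩ <;>
      (rw [hη] at hcon; rcases hcon with h | h <;> simp [labelOf] at h)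
  | awUp n₀ b₀ =>
    refine ⟨fun hcon => ?_, fun hcon => ?_⟩ <;>
      (rw [hη] at hcon; rcases hcon with h | h <;> simp [labelOf] at h)
  | acDown n₀ b₀ =>
    have hall : ∀ e ∈ (flowOf Φ).edges v, piOf Φ e = b₀ := by
      intro e he
      rcases hedges e he with ⟨nn, hnn, rfl⟩ | ⟨d, hd, rfl⟩
      · simp only [ruleNew, List.mem_singleton] at hnn
        subst hnn
        have o1 : (Φ.fml (v + 1)).sub ((Φ.stepAt v).2.1 ++ []) =
            some (.atom n₀ b₀) := by rw [hψ, Formula.sub_repl_prefix _ hγ]; rfl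
        exact piOf_Ef hwf hnf1 o1
      · simp only [ruleDead, List.mem_cons, List.not_mem_nil, or_false,
          List.mem_singleton] at hd
        rcases hd with rfl | rfl
        · have o1 : (Φ.fml v).sub ((Φ.stepAt v).2.1 ++ [false]) =
              some (.atom n₀ b₀) := by rw [Formula.sub_append, hγ]; rfl
          exact piOf_Ef hwf hnfv o1
        · have o1 : (Φ.fml v).sub ((Φ.stepAt v).2.1 ++ [true]) =
              some (.atom n₀ b₀) := by rw [Formula.sub_append, hγ]; rfl
          exact piOf_Ef hwf hnfv o1
    refine ⟨fun _ e₁ h₁ e₂ h₂ => by rw [hall e₁ h₁, hall e₂ h₂], fun hcon => ?_⟩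
    rw [hη] at hcon; rcases hcon with h | h <;> simp [labelOf] at h
  | acUp n₀ b₀ =>
    have hall : ∀ e ∈ (flowOf Φ).edges v, piOf Φ e = b₀ := by
      intro e he
      rcases hedges e he with ⟨nn, hnn, rfl⟩ | ⟨d, hd, rfl⟩
      · simp only [ruleNew, List.mem_cons, List.not_mem_nil, or_false,
          List.mem_singleton] at hnn
        rcases hnn with rfl | rfl
        · have o1 : (Φ.fml (v + 1)).sub ((Φ.stepAt v).2.1 ++ [false]) =
              some (.atom n₀ b₀) := by rw [hψ, Formula.sub_repl_prefix _ hγ]; rfl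
          exact piOf_Ef hwf hnf1 o1
        · have o1 : (Φ.fml (v + 1)).sub ((Φ.stepAt v).2.1 ++ [true]) =
              some (.atom n₀ b₀) := by rw [hψ, Formula.sub_repl_prefix _ hγ]; rfl
          exact piOf_Ef hwf hnf1 o1
      · simp only [ruleDead, List.mem_singleton] at hd
        subst hd
        have o1 : (Φ.fml v).sub ((Φ.stepAt v).2.1 ++ []) =
            some (.atom n₀ b₀) := by rw [Formula.sub_append, hγ]; rfl
        exact piOf_Ef hwf hnfv o1
    refine ⟨fun _ e₁ h₁ e₂ h₂ => by rw [hall e₁ h₁, hall e₂ h₂], fun hcon => ?_⟩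
    rw [hη] at hcon; rcases hcon with h | h <;> simp [labelOf] at h
  | s α β γ' => simp [RuleName.isStructural] at hstr
  | m α β γ' δ' => simp [RuleName.isStructural] at hstr
  | eqOrComm α β => simp [RuleName.isStructural] at hstr
  | eqAndComm α β => simp [RuleName.isStructural] at hstr
  | eqOrAssocL α β γ' => simp [RuleName.isStructural] at hstr
  | eqOrAssocR α β γ' => simp [RuleName.isStructural] at hstr
  | eqAndAssocL α β γ' => simp [RuleName.isStructural] at hstr
  | eqAndAssocR α β γ' => simp [RuleName.isStructural] at hstr
  | eqOrUnitDel α => simp [RuleName.isStructural] at hstr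
  | eqOrUnitAdd α => simp [RuleName.isStructural] at hstr
  | eqAndUnitDel α => simp [RuleName.isStructural] at hstr
  | eqAndUnitAdd α => simp [RuleName.isStructural] at hstr
  | eqTTDel => simp [RuleName.isStructural] at hstr
  | eqTTAdd => simp [RuleName.isStructural] at hstr
  | eqFFDel => simp [RuleName.isStructural] at hstr
  | eqFFAdd => simp [RuleName.isStructural] at hstr
theorem exists_assocFlow (Φ : Deriv) (hwf : Φ.WF) :
    IsAssocFlow Φ (flowOf Φ) (Ef Φ) id := by
  refine ⟨hwf,
    ⟨degOK_flowOf Φ hwf, endpointsOK_flowOf Φ hwf, acyclic_flowOf Φ hwf,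
      piOf Φ, polarity_flowOf Φ hwf⟩,
    fun i p hi hp => mem_E_of_occ hi hp,
    ?_, ?_, ?_, ?_,
    fun i hi hstr => mem_V_iff.2 ⟨hi, hstr⟩,
    fun v hv => ⟨v, (mem_V_iff.1 hv).1, (mem_V_iff.1 hv).2, rfl⟩,
    fun i j _ _ _ _ h => h,
    fun i hi => stepCond_holds Φ hwf hi⟩
  · intro e he
    obtain ⟨i, hi, p, hp, he⟩ := mem_E_iff.1 he
    exact ⟨i, p, hi, hp, he⟩
  · intro i p p' hi hp hp' heq
    obtain ⟨n, b, hsub⟩ := hp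
    obtain ⟨n', b', hsub'⟩ := hp'
    exact (master Φ hwf i hi p n b hsub).2.1 p' n' b' hsub' heq
  · intro p hp
    rw [Ef_zero]
    exact up_pair_zero _
  · intro p hp
    obtain ⟨n, b, hsub⟩ := hp
    exact lo_Ef_concl hwf hsub
section Bridges
variable {A : PreFlow} {f : ℕ → List Bool → ℕ} {v i : ℕ} {r : RuleName}
  {q : List Bool} {φ ψ : Formula}

theorem sc_ctx (h : stepCond A f v i r q φ ψ) :
    ∀ p, ¬ (q <+: p) → φ.IsOcc p → f (i + 1) p = f i p := h.1

theorem sc_corr (h : stepCond A f v i r q φ ψ) :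
    ∀ c ∈ ruleCorr r, ∀ t, ψ.IsOcc (q ++ c.1 ++ t) →
      f (i + 1) (q ++ c.1 ++ t) = f i (q ++ c.2 ++ t) := by
  cases r <;>
    first
      | exact fun c hc t hocc => h.2 c hc t hocc
      | exact fun c hc => by simp [ruleCorr] at hc

theorem sc_new (h : stepCond A f v i r q φ ψ) :
    ∀ nn ∈ ruleNew r, A.up (f (i + 1) (q ++ nn)) = some v := by
  intro nn hnn
  cases r <;> simp only [ruleNew, List.mem_cons, List.mem_singleton,
    List.not_mem_nil, or_false] at hnn
  case aiDown => rcases hnn with rfl | rfl; exacts [h.2.2.1, h.2.2.2.1]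
  case awDown => subst hnn; simpa using h.2.2
  case acDown => subst hnn; simpa using h.2.2.2.2.1
  case acUp => rcases hnn with rfl | rfl; exacts [h.2.2.2.1, h.2.2.2.2.1]
  all_goals exact hnn.elim

theorem sc_dead (h : stepCond A f v i r q φ ψ) :
    ∀ d ∈ ruleDead r, A.lo (f i (q ++ d)) = some v := by
  intro d hd
  cases r <;> simp only [ruleDead, List.mem_cons, List.mem_singleton,
    List.not_mem_nil, or_false] at hd
  case aiUp => rcases hd with rfl | rfl; exacts [h.2.2.1, h.2.2.2.1]
  case awUp => subst hd; simpa using h.2.2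
  case acDown => rcases hd with rfl | rfl; exacts [h.2.2.1, h.2.2.2.1]
  case acUp => subst hd; simpa using h.2.2.1
  all_goals exact hd.elim

theorem sc_eta (h : stepCond A f v i r q φ ψ) (hstr : r.isStructural = true) :
    A.η v = labelOf r := by
  cases r <;> first
    | exact h.2.1
    | simp [RuleName.isStructural] at hstr

end Bridges
/-- The creation point of an atom occurrence (depends only on `Φ`). -/
def origin (Φ : Deriv) : ℕ → List Bool → ℕ × List Bool
  | 0, p => (0, p)
  | (i+1), p =>
    match traceBack (Φ.stepAt i).1 (Φ.stepAt i).2.1 p with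
    | some p' => origin Φ i p'
    | none => (i + 1, p)

def OriginSpec (Φ : Deriv) (o : ℕ × List Bool) : Prop :=
  o.1 = 0 ∨ ∃ k, o.1 = k + 1 ∧ k < Φ.steps.length ∧
    (Φ.stepAt k).1.isStructural = true ∧
    ∃ nn ∈ ruleNew (Φ.stepAt k).1, o.2 = (Φ.stepAt k).2.1 ++ nn

/-- The death point of an atom occurrence (depends only on `Φ`). -/
def fateAux (Φ : Deriv) : ℕ → ℕ → List Bool → Option (ℕ × List Bool)
  | 0, _, _ => none
  | (fuel+1), i, p =>
    match traceFwd (Φ.stepAt i).1 (Φ.stepAt i).2.1 p with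
    | some p' => fateAux Φ fuel (i + 1) p'
    | none => some (i, p)

def fate (Φ : Deriv) (i : ℕ) (p : List Bool) : Option (ℕ × List Bool) :=
  fateAux Φ (Φ.steps.length - i) i p

theorem origin_spec {Φ : Deriv} {A : PreFlow} {f : ℕ → List Bool → ℕ} {g : ℕ → ℕ}
    (H : IsAssocFlow Φ A f g) :
    ∀ i, i < Φ.nf → ∀ p n b, (Φ.fml i).sub p = some (.atom n b) →
      f i p = f (origin Φ i p).1 (origin Φ i p).2 ∧
      (origin Φ i p).1 ≤ i ∧
      (Φ.fml (origin Φ i p).1).sub (origin Φ i p).2 = some (.atom n b) ∧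
      OriginSpec Φ (origin Φ i p) := by
  obtain ⟨hwf, -, -, -, -, -, -, -, -, -, h11⟩ := H
  intro i
  induction i with
  | zero => intro _ p n b hp; exact ⟨rfl, le_refl _, hp, Or.inl rfl⟩
  | succ i IH =>
    intro hi p n b hp
    have hlen : i < Φ.steps.length := by simp only [Deriv.nf] at hi; omega
    have hinf : i < Φ.nf := by simp only [Deriv.nf]; omega
    have hst := hwf i hlen
    have hsc := h11 i hlen
    rcases step_concl_classify hst hp with ⟨hnp, hφp, htb⟩ |
      ⟨c, hc, t, hpe, hφp, htb⟩ | ⟨nn, hnn, hpe, hstr, htb⟩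
    · have ho : origin Φ (i + 1) p = origin Φ i p := by simp only [origin, htb]
      have hf : f (i + 1) p = f i p := sc_ctx hsc p hnp ⟨n, b, hφp⟩
      obtain ⟨e1, e2, e3, e4⟩ := IH hinf p n b hφp
      exact ⟨by rw [hf, ho]; exact e1, by rw [ho]; omega,
        by rw [ho]; exact e3, by rw [ho]; exact e4⟩
    · subst hpe
      have ho : origin Φ (i + 1) ((Φ.stepAt i).2.1 ++ c.1 ++ t) =
          origin Φ i ((Φ.stepAt i).2.1 ++ c.2 ++ t) := by simp only [origin, htb]
      have hf := sc_corr hsc c hc t ⟨n, b, hp⟩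
      obtain ⟨e1, e2, e3, e4⟩ := IH hinf _ n b hφp
      exact ⟨by rw [hf, ho]; exact e1, by rw [ho]; omega,
        by rw [ho]; exact e3, by rw [ho]; exact e4⟩
    · have ho : origin Φ (i + 1) p = (i + 1, p) := by simp only [origin, htb]
      refine ⟨by rw [ho], by rw [ho], by rw [ho]; exact hp,
        Or.inr ⟨i, by rw [ho], hlen, hstr, nn, hnn, by rw [ho]; exact hpe⟩⟩

theorem origin_inj {Φ : Deriv} {A : PreFlow} {f : ℕ → List Bool → ℕ} {g : ℕ → ℕ}
    (H : IsAssocFlow Φ A f g) {c c' : ℕ} {p₀ p₀' : List Bool}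
    (hs : OriginSpec Φ (c, p₀)) (hs' : OriginSpec Φ (c', p₀'))
    (ho : (Φ.fml c).IsOcc p₀) (ho' : (Φ.fml c').IsOcc p₀')
    (heq : f c p₀ = f c' p₀') : c = c' ∧ p₀ = p₀' := by
  obtain ⟨hwf, -, -, -, h5, h6, -, -, -, h10, h11⟩ := H
  have hposnf : 0 < Φ.nf := Nat.succ_pos _
  rcases hs with h0 | ⟨k, hk1, hk2, hk3, nn, hnn, hp⟩ <;>
    rcases hs' with h0' | ⟨k', hk1', hk2', hk3', nn', hnn', hp'⟩
  · have h0 : c = 0 := h0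
    have h0' : c' = 0 := h0'
    subst h0; subst h0'
    exact ⟨rfl, h5 0 p₀ p₀' hposnf ho ho' heq⟩
  · have h0 : c = 0 := h0
    have hk1' : c' = k' + 1 := hk1'
    have hp' : p₀' = (Φ.stepAt k').2.1 ++ nn' := hp'
    subst h0; subst hk1'; subst hp'
    have hu1 : A.up (f 0 p₀) = none := h6 p₀ ho
    have hu2 : A.up (f (k' + 1) ((Φ.stepAt k').2.1 ++ nn')) = some (g k') :=
      sc_new (h11 k' hk2') nn' hnn'
    rw [heq, hu2] at hu1
    cases hu1
  · have h0' : c' = 0 := h0'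
    have hk1 : c = k + 1 := hk1
    have hp : p₀ = (Φ.stepAt k).2.1 ++ nn := hp
    subst h0'; subst hk1; subst hp
    have hu1 : A.up (f 0 p₀') = none := h6 p₀' ho'
    have hu2 : A.up (f (k + 1) ((Φ.stepAt k).2.1 ++ nn)) = some (g k) :=
      sc_new (h11 k hk2) nn hnn
    rw [← heq, hu2] at hu1
    cases hu1
  · have hk1 : c = k + 1 := hk1
    have hk1' : c' = k' + 1 := hk1'
    have hp : p₀ = (Φ.stepAt k).2.1 ++ nn := hp
    have hp' : p₀' = (Φ.stepAt k').2.1 ++ nn' := hp'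
    subst hk1; subst hk1'; subst hp; subst hp'
    have hu1 : A.up (f (k + 1) ((Φ.stepAt k).2.1 ++ nn)) = some (g k) :=
      sc_new (h11 k hk2) nn hnn
    have hu2 : A.up (f (k' + 1) ((Φ.stepAt k').2.1 ++ nn')) = some (g k') :=
      sc_new (h11 k' hk2') nn' hnn'
    rw [heq, hu2] at hu1
    have hkk : k = k' := h10 k k' hk2 hk2' hk3 hk3' (Option.some_injective _ hu1).symm
    subst hkk
    refine ⟨rfl, h5 (k + 1) _ _ (by simp only [Deriv.nf]; omega) ho ho' heq⟩

theorem transfer {Φ : Deriv} {A A' : PreFlow} {f f' : ℕ → List Bool → ℕ}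
    {g g' : ℕ → ℕ} (H : IsAssocFlow Φ A f g) (H' : IsAssocFlow Φ A' f' g')
    {i j : ℕ} {p p' : List Bool} (hi : i < Φ.nf) (hj : j < Φ.nf)
    (hp : (Φ.fml i).IsOcc p) (hp' : (Φ.fml j).IsOcc p')
    (heq : f i p = f j p') : f' i p = f' j p' := by
  obtain ⟨n, b, hsub⟩ := hp
  obtain ⟨n', b', hsub'⟩ := hp'
  obtain ⟨a1, a2, a3, a4⟩ := origin_spec H i hi p n b hsub
  obtain ⟨b1, b2, b3, b4⟩ := origin_spec H j hj p' n' b' hsub'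
  have hoo : origin Φ i p = origin Φ j p' := by
    have := origin_inj H (c := (origin Φ i p).1) (p₀ := (origin Φ i p).2)
      (c' := (origin Φ j p').1) (p₀' := (origin Φ j p').2)
      a4 b4 ⟨n, b, a3⟩ ⟨n', b', b3⟩ (by rw [← a1, ← b1]; exact heq)
    exact Prod.ext this.1 this.2
  obtain ⟨c1, -, -, -⟩ := origin_spec H' i hi p n b hsub
  obtain ⟨d1, -, -, -⟩ := origin_spec H' j hj p' n' b' hsub'
  rw [c1, d1, hoo]

theorem fate_spec {Φ : Deriv} {A : PreFlow} {f : ℕ → List Bool → ℕ} {g : ℕ → ℕ}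
    (H : IsAssocFlow Φ A f g) :
    ∀ fuel i p n b, fuel = Φ.steps.length - i → i < Φ.nf →
      (Φ.fml i).sub p = some (.atom n b) →
      (fateAux Φ fuel i p = none ∧ A.lo (f i p) = none) ∨
      (∃ k pk, fateAux Φ fuel i p = some (k, pk) ∧ k < Φ.steps.length ∧
        (Φ.stepAt k).1.isStructural = true ∧ A.lo (f i p) = some (g k)) := by
  obtain ⟨hwf, -, -, -, -, -, h7, -, -, -, h11⟩ := H
  intro fuel
  induction fuel with
  | zero =>
    intro i p n b hm hi hp
    have hieq : i = Φ.steps.length := by simp only [Deriv.nf] at hi; omega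
    subst hieq
    exact Or.inl ⟨rfl, h7 p ⟨n, b, hp⟩⟩
  | succ fuel IH =>
    intro i p n b hm hi hp
    have hilen : i < Φ.steps.length := by omega
    have hst := hwf i hilen
    have hsc := h11 i hilen
    have hinf1 : i + 1 < Φ.nf := by simp only [Deriv.nf]; omega
    rcases step_prem_classify hst hp with ⟨hnp, hψp, htf⟩ |
      ⟨c, hc, t, hpe, hψp, htf⟩ | ⟨d, hd, hpe, hstr, htf⟩
    · have hfa : fateAux Φ (fuel + 1) i p = fateAux Φ fuel (i + 1) p := by
        simp only [fateAux, htf]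
      have hf : f (i + 1) p = f i p := sc_ctx hsc p hnp ⟨n, b, hp⟩
      rcases IH (i + 1) p n b (by omega) hinf1 hψp with ⟨e1, e2⟩ | ⟨k, pk, e1, e2, e3, e4⟩
      · exact Or.inl ⟨by rw [hfa]; exact e1, by rw [← hf]; exact e2⟩
      · exact Or.inr ⟨k, pk, by rw [hfa]; exact e1, e2, e3, by rw [← hf]; exact e4⟩
    · subst hpe
      have hfa : fateAux Φ (fuel + 1) i ((Φ.stepAt i).2.1 ++ c.2 ++ t) =
          fateAux Φ fuel (i + 1) ((Φ.stepAt i).2.1 ++ c.1 ++ t) := by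
        simp only [fateAux, htf]
      have hf := sc_corr hsc c hc t ⟨n, b, hψp⟩
      rcases IH (i + 1) _ n b (by omega) hinf1 hψp with ⟨e1, e2⟩ | ⟨k, pk, e1, e2, e3, e4⟩
      · exact Or.inl ⟨by rw [hfa]; exact e1, by rw [← hf]; exact e2⟩
      · exact Or.inr ⟨k, pk, by rw [hfa]; exact e1, e2, e3, by rw [← hf]; exact e4⟩
    · subst hpe
      refine Or.inr ⟨i, (Φ.stepAt i).2.1 ++ d, ?_, hilen, hstr, sc_dead hsc d hd⟩
      simp only [fateAux, htf]
attribute [local instance] Classical.propDecidable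

noncomputable def vmapOf (Φ : Deriv) (g g' : ℕ → ℕ) : ℕ → ℕ := fun v =>
  if h : ∃ i, i < Φ.steps.length ∧ (Φ.stepAt i).1.isStructural = true ∧ g i = v
  then g' h.choose else v

noncomputable def emapOf (Φ : Deriv) (f f' : ℕ → List Bool → ℕ) : ℕ → ℕ := fun e =>
  if h : ∃ ip : ℕ × List Bool, ip.1 < Φ.nf ∧ (Φ.fml ip.1).IsOcc ip.2 ∧ f ip.1 ip.2 = e
  then f' h.choose.1 h.choose.2 else e

theorem iso_of_assoc {Φ : Deriv} {A A' : PreFlow} {f f' : ℕ → List Bool → ℕ}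
    {g g' : ℕ → ℕ} (H : IsAssocFlow Φ A f g) (H' : IsAssocFlow Φ A' f' g') :
    Nonempty (FlowIso A A') := by
  classical
  obtain ⟨hwf, hfl, h3, h4, h5, h6, h7, h8, h9, h10, h11⟩ := id H
  obtain ⟨hwf', hfl', h3', h4', h5', h6', h7', h8', h9', h10', h11'⟩ := id H'
  have hvg : ∀ i, i < Φ.steps.length → (Φ.stepAt i).1.isStructural = true →
      vmapOf Φ g g' (g i) = g' i := by
    intro i hi hs
    have hex : ∃ j, j < Φ.steps.length ∧ (Φ.stepAt j).1.isStructural = true ∧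
        g j = g i := ⟨i, hi, hs, rfl⟩
    rw [vmapOf, dif_pos hex]
    obtain ⟨hj1, hj2, hj3⟩ := hex.choose_spec
    rw [h10 _ _ hj1 hi hj2 hs hj3]
  have hef : ∀ i p, i < Φ.nf → (Φ.fml i).IsOcc p →
      emapOf Φ f f' (f i p) = f' i p := by
    intro i p hi hp
    have hex : ∃ ip : ℕ × List Bool, ip.1 < Φ.nf ∧ (Φ.fml ip.1).IsOcc ip.2 ∧
        f ip.1 ip.2 = f i p := ⟨(i, p), hi, hp, rfl⟩
    rw [emapOf, dif_pos hex]
    obtain ⟨hc1, hc2, hc3⟩ := hex.choose_spec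
    exact transfer H H' hc1 hi hc2 hp hc3
  refine ⟨⟨vmapOf Φ g g', emapOf Φ f f', ⟨?_, ?_, ?_⟩, ⟨?_, ?_, ?_⟩, ?_, ?_, ?_⟩⟩
  · -- vmap maps to
    intro v hv
    obtain ⟨i, hi, hs, rfl⟩ := h9 v (Finset.mem_coe.1 hv)
    rw [hvg i hi hs]
    exact Finset.mem_coe.2 (h8' i hi hs)
  · -- vmap inj on
    intro v1 hv1 v2 hv2 he
    obtain ⟨i1, hi1, hs1, rfl⟩ := h9 v1 (Finset.mem_coe.1 hv1)
    obtain ⟨i2, hi2, hs2, rfl⟩ := h9 v2 (Finset.mem_coe.1 hv2)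
    rw [hvg i1 hi1 hs1, hvg i2 hi2 hs2] at he
    rw [h10' _ _ hi1 hi2 hs1 hs2 he]
  · -- vmap surj on
    intro v' hv'
    obtain ⟨i, hi, hs, rfl⟩ := h9' v' (Finset.mem_coe.1 hv')
    exact ⟨g i, Finset.mem_coe.2 (h8 i hi hs), hvg i hi hs⟩
  · -- emap maps to
    intro e he
    obtain ⟨i, p, hi, hp, rfl⟩ := h4 e (Finset.mem_coe.1 he)
    rw [hef i p hi hp]
    exact Finset.mem_coe.2 (h3' i p hi hp)
  · -- emap inj on
    intro e1 he1 e2 he2 he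
    obtain ⟨i1, p1, hi1, hp1, rfl⟩ := h4 e1 (Finset.mem_coe.1 he1)
    obtain ⟨i2, p2, hi2, hp2, rfl⟩ := h4 e2 (Finset.mem_coe.1 he2)
    rw [hef i1 p1 hi1 hp1, hef i2 p2 hi2 hp2] at he
    exact transfer H' H hi1 hi2 hp1 hp2 he
  · -- emap surj on
    intro e' he'
    obtain ⟨j, p', hj, hp', rfl⟩ := h4' e' (Finset.mem_coe.1 he')
    exact ⟨f j p', Finset.mem_coe.2 (h3 j p' hj hp'), hef j p' hj hp'⟩
  · -- labels
    intro v hv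
    obtain ⟨i, hi, hs, rfl⟩ := h9 v hv
    rw [hvg i hi hs, sc_eta (h11' i hi) hs, sc_eta (h11 i hi) hs]
  · -- up compatibility
    intro e he
    obtain ⟨i, p, hi, hp, rfl⟩ := h4 e he
    rw [hef i p hi hp]
    obtain ⟨n, b, hsub⟩ := hp
    obtain ⟨a1, a2, a3, a4⟩ := origin_spec H i hi p n b hsub
    obtain ⟨c1, -, c3, -⟩ := origin_spec H' i hi p n b hsub
    rw [a1, c1]
    rcases a4 with h0 | ⟨k, hk1, hk2, hk3, nn, hnn, hp0⟩
    · rw [h0] at a3 c3 ⊢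
      rw [h6 _ ⟨n, b, a3⟩, h6' _ ⟨n, b, c3⟩]
      rfl
    · rw [hk1, hp0]
      rw [sc_new (h11 k hk2) nn hnn, sc_new (h11' k hk2) nn hnn]
      rw [Option.map_some, hvg k hk2 hk3]
  · -- lo compatibility
    intro e he
    obtain ⟨i, p, hi, hp, rfl⟩ := h4 e he
    rw [hef i p hi hp]
    obtain ⟨n, b, hsub⟩ := hp
    rcases fate_spec H (Φ.steps.length - i) i p n b rfl hi hsub with
      ⟨e1, e2⟩ | ⟨k, pk, e1, e2, e3, e4⟩ <;>
      rcases fate_spec H' (Φ.steps.length - i) i p n b rfl hi hsub with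
        ⟨e1', e2'⟩ | ⟨k', pk', e1', e2', e3', e4'⟩
    · rw [e2, e2']; rfl
    · rw [e1] at e1'; cases e1'
    · rw [e1] at e1'; cases e1'
    · rw [e1] at e1'
      have hkk : k = k' ∧ pk = pk' := by
        have := Option.some_injective _ e1'
        exact ⟨congrArg Prod.fst this, congrArg Prod.snd this⟩
      obtain ⟨rfl, rfl⟩ := hkk
      rw [e4, e4', Option.map_some, hvg k e2 e3]
/-- For every SKS derivation `Φ` there exists an atomic
flow `A`, together with a (surjective) tracing map from the atom occurrences
of `Φ` onto the edges of `A` satisfying the association conditions, and `A`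
is unique up to isomorphism. -/
theorem statement_5 (Φ : Deriv) (hΦ : Φ.WF) :
    (∃ (A : PreFlow) (f : ℕ → List Bool → ℕ) (g : ℕ → ℕ),
      IsAssocFlow Φ A f g) ∧
    (∀ (A A' : PreFlow) (f f' : ℕ → List Bool → ℕ) (g g' : ℕ → ℕ),
      IsAssocFlow Φ A f g → IsAssocFlow Φ A' f' g' →
      Nonempty (FlowIso A A')) :=
  ⟨⟨flowOf Φ, Ef Φ, id, exists_assocFlow Φ hΦ⟩,
    fun _ _ _ _ _ _ H H' => iso_of_assoc H H'⟩

end AF
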